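/- arXiv:1411.4190 — 2 statements merged into one kernel-verified Lean document; each statement's English description precedes it below -/
import Mathlib

section
/- Let p be an odd prime and λ = (λ₁, 1) with 0 ≤ λ₁ ≤ p−1. Then every element of the JK-group G_λ^(p) that does not lie in the center Z(G_λ^(p)) has order exactly p². -/
def gcomm {G : Type*} [Group G] (x y : G) : G := x⁻¹ * y⁻¹ * x * y

def jkRels (p : ℕ) (lam : ℕ × ℕ) : Set (FreeGroup (Fin 4)) :=
  {r | ∃ i j k : Fin 4,
      r = gcomm (gcomm (FreeGroup.of i) (FreeGroup.of j)) (FreeGroup.of k)} ∪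
  {FreeGroup.of 0 ^ p * (gcomm (FreeGroup.of 0) (FreeGroup.of 2))⁻¹,
   FreeGroup.of 1 ^ p *
     (gcomm (FreeGroup.of 0) (FreeGroup.of 2 ^ lam.1 * FreeGroup.of 3 ^ lam.2))⁻¹,
   FreeGroup.of 2 ^ p * (gcomm (FreeGroup.of 1) (FreeGroup.of 2 * FreeGroup.of 3))⁻¹,
   FreeGroup.of 3 ^ p * (gcomm (FreeGroup.of 1) (FreeGroup.of 3))⁻¹,
   gcomm (FreeGroup.of 0) (FreeGroup.of 1),
   gcomm (FreeGroup.of 2) (FreeGroup.of 3)}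

abbrev JKGroup (p : ℕ) (lam : ℕ × ℕ) : Type := PresentedGroup (jkRels p lam)

def jka₁ (p : ℕ) (lam : ℕ × ℕ) : JKGroup p lam := PresentedGroup.of 0
def jka₂ (p : ℕ) (lam : ℕ × ℕ) : JKGroup p lam := PresentedGroup.of 1
def jkb₁ (p : ℕ) (lam : ℕ × ℕ) : JKGroup p lam := PresentedGroup.of 2
def jkb₂ (p : ℕ) (lam : ℕ × ℕ) : JKGroup p lam := PresentedGroup.of 3

namespace JKP

@[ext]
structure MG (p l : ℕ) : Type where
  x0 : ZMod (p^2)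
  x1 : ZMod (p^2)
  x2 : ZMod (p^2)
  x3 : ZMod (p^2)

namespace MG

variable {p l : ℕ}

instance : One (MG p l) := ⟨⟨0,0,0,0⟩⟩
instance : Mul (MG p l) :=
  ⟨fun u v => ⟨u.x0 + v.x0 + (p:ZMod (p^2)) * ((l:ZMod (p^2)) * u.x3 - u.x2) * v.x0,
    u.x1 + v.x1 - (p:ZMod (p^2)) * u.x3 * v.x0,
    u.x2 + v.x2 - (p:ZMod (p^2)) * u.x2 * v.x1,
    u.x3 + v.x3 + (p:ZMod (p^2)) * (u.x2 - u.x3) * v.x1⟩⟩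
instance : Inv (MG p l) :=
  ⟨fun u => ⟨-u.x0 + (p:ZMod (p^2)) * ((l:ZMod (p^2)) * u.x3 - u.x2) * u.x0,
    -u.x1 - (p:ZMod (p^2)) * u.x3 * u.x0,
    -u.x2 - (p:ZMod (p^2)) * u.x2 * u.x1,
    -u.x3 + (p:ZMod (p^2)) * (u.x2 - u.x3) * u.x1⟩⟩

@[simp] lemma one_x0 : (1 : MG p l).x0 = 0 := rfl
@[simp] lemma one_x1 : (1 : MG p l).x1 = 0 := rfl
@[simp] lemma one_x2 : (1 : MG p l).x2 = 0 := rfl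
@[simp] lemma one_x3 : (1 : MG p l).x3 = 0 := rfl
@[simp] lemma mul_x0 (u v : MG p l) :
    (u * v).x0 = u.x0 + v.x0 + (p:ZMod (p^2)) * ((l:ZMod (p^2)) * u.x3 - u.x2) * v.x0 := rfl
@[simp] lemma mul_x1 (u v : MG p l) :
    (u * v).x1 = u.x1 + v.x1 - (p:ZMod (p^2)) * u.x3 * v.x0 := rfl
@[simp] lemma mul_x2 (u v : MG p l) :
    (u * v).x2 = u.x2 + v.x2 - (p:ZMod (p^2)) * u.x2 * v.x1 := rfl
@[simp] lemma mul_x3 (u v : MG p l) :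
    (u * v).x3 = u.x3 + v.x3 + (p:ZMod (p^2)) * (u.x2 - u.x3) * v.x1 := rfl
@[simp] lemma inv_x0 (u : MG p l) :
    (u⁻¹).x0 = -u.x0 + (p:ZMod (p^2)) * ((l:ZMod (p^2)) * u.x3 - u.x2) * u.x0 := rfl
@[simp] lemma inv_x1 (u : MG p l) :
    (u⁻¹).x1 = -u.x1 - (p:ZMod (p^2)) * u.x3 * u.x0 := rfl
@[simp] lemma inv_x2 (u : MG p l) :
    (u⁻¹).x2 = -u.x2 - (p:ZMod (p^2)) * u.x2 * u.x1 := rfl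
@[simp] lemma inv_x3 (u : MG p l) :
    (u⁻¹).x3 = -u.x3 + (p:ZMod (p^2)) * (u.x2 - u.x3) * u.x1 := rfl

lemma hp2 : (p : ZMod (p^2)) * (p : ZMod (p^2)) = 0 := by
  have h : ((p^2 : ℕ) : ZMod (p^2)) = 0 := ZMod.natCast_self _
  push_cast at h
  linear_combination h

instance : Group (MG p l) := by
  refine Group.ofLeftAxioms ?_ ?_ ?_
  · intro a b c
    ext
    · show (a*b*c).x0 = (a*(b*c)).x0
      simp only [mul_x0, mul_x1, mul_x2, mul_x3]
      linear_combination ((l:ZMod (p^2))*a.x2*b.x1*c.x0 + (l:ZMod (p^2))*a.x2*b.x3*c.x0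
        - (l:ZMod (p^2))*a.x3*b.x1*c.x0 + (l:ZMod (p^2))*a.x3*b.x2*c.x0
        - (l:ZMod (p^2))^2*a.x3*b.x3*c.x0 + a.x2*b.x1*c.x0 - a.x2*b.x2*c.x0) * hp2
    · show (a*b*c).x1 = (a*(b*c)).x1
      simp only [mul_x0, mul_x1, mul_x2, mul_x3]
      linear_combination ((l:ZMod (p^2))*a.x3*b.x3*c.x0 - a.x2*b.x1*c.x0 + a.x3*b.x1*c.x0
        - a.x3*b.x2*c.x0) * hp2
    · show (a*b*c).x2 = (a*(b*c)).x2
      simp only [mul_x0, mul_x1, mul_x2, mul_x3]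
      linear_combination (a.x2*b.x1*c.x1 - a.x2*b.x3*c.x0) * hp2
    · show (a*b*c).x3 = (a*(b*c)).x3
      simp only [mul_x0, mul_x1, mul_x2, mul_x3]
      linear_combination (-2*a.x2*b.x1*c.x1 + a.x2*b.x3*c.x0 + a.x3*b.x1*c.x1
        - a.x3*b.x3*c.x0) * hp2
  · intro a
    ext <;> simp
  · intro a
    ext
    · show (a⁻¹*a).x0 = (1 : MG p l).x0
      simp only [mul_x0, inv_x0, inv_x1, inv_x2, inv_x3, one_x0]
      linear_combination ((l:ZMod (p^2))*a.x0*a.x1*a.x2 - (l:ZMod (p^2))*a.x0*a.x1*a.x3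
        + a.x0*a.x1*a.x2) * hp2
    · show (a⁻¹*a).x1 = (1 : MG p l).x1
      simp only [mul_x1, inv_x0, inv_x1, inv_x2, inv_x3, one_x1]
      linear_combination (-a.x0*a.x1*a.x2 + a.x0*a.x1*a.x3) * hp2
    · show (a⁻¹*a).x2 = (1 : MG p l).x2
      simp only [mul_x2, inv_x0, inv_x1, inv_x2, inv_x3, one_x2]
      linear_combination (a.x1^2*a.x2) * hp2
    · show (a⁻¹*a).x3 = (1 : MG p l).x3
      simp only [mul_x3, inv_x0, inv_x1, inv_x2, inv_x3, one_x3]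
      linear_combination (-2*a.x1^2*a.x2 + a.x1^2*a.x3) * hp2

-- continuation to append inside namespace MG
section
variable {p l : ℕ}

/-- reduction mod p of a coordinate -/
noncomputable def cm (p : ℕ) : ZMod (p^2) →+* ZMod p :=
  ZMod.castHom (dvd_pow_self p two_ne_zero) (ZMod p)

lemma cm_p : cm p ((p : ZMod (p^2))) = 0 := by
  rw [map_natCast, ZMod.natCast_self]

lemma cm_mul_coord (u v : MG p l) :
    cm p ((u*v).x0) = cm p u.x0 + cm p v.x0 ∧
    cm p ((u*v).x1) = cm p u.x1 + cm p v.x1 ∧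
    cm p ((u*v).x2) = cm p u.x2 + cm p v.x2 ∧
    cm p ((u*v).x3) = cm p u.x3 + cm p v.x3 := by
  refine ⟨?_, ?_, ?_, ?_⟩ <;>
    simp [map_add, map_sub, map_mul, cm_p]

lemma cm_inv_coord (u : MG p l) :
    cm p ((u⁻¹).x0) = - cm p u.x0 ∧
    cm p ((u⁻¹).x1) = - cm p u.x1 ∧
    cm p ((u⁻¹).x2) = - cm p u.x2 ∧
    cm p ((u⁻¹).x3) = - cm p u.x3 := by
  refine ⟨?_, ?_, ?_, ?_⟩ <;>
    simp [map_add, map_sub, map_neg, map_mul, cm_p]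

lemma cm_gcomm (u v : MG p l) :
    cm p ((gcomm u v).x0) = 0 ∧ cm p ((gcomm u v).x1) = 0 ∧
    cm p ((gcomm u v).x2) = 0 ∧ cm p ((gcomm u v).x3) = 0 := by
  rw [gcomm]
  obtain ⟨a0, a1, a2, a3⟩ := cm_mul_coord (u⁻¹ * v⁻¹ * u) v
  obtain ⟨b0, b1, b2, b3⟩ := cm_mul_coord (u⁻¹ * v⁻¹) u
  obtain ⟨c0, c1, c2, c3⟩ := cm_mul_coord (u⁻¹ : MG p l) v⁻¹
  obtain ⟨d0, d1, d2, d3⟩ := cm_inv_coord u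
  obtain ⟨e0, e1, e2, e3⟩ := cm_inv_coord v
  constructor
  · rw [a0, b0, c0, d0, e0]; ring
  constructor
  · rw [a1, b1, c1, d1, e1]; ring
  constructor
  · rw [a2, b2, c2, d2, e2]; ring
  · rw [a3, b3, c3, d3, e3]; ring

/-- p-divisibility of an element -/
def pdiv (u : MG p l) : Prop :=
  ∃ a b c d : ZMod (p^2),
    u = ⟨(p:ZMod (p^2))*a, (p:ZMod (p^2))*b, (p:ZMod (p^2))*c, (p:ZMod (p^2))*d⟩

lemma exists_of_cm_eq_zero [NeZero p] (v : ZMod (p^2)) (h : cm p v = 0) :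
    ∃ w, v = (p:ZMod (p^2)) * w := by
  haveI : NeZero (p^2) := ⟨pow_ne_zero 2 (NeZero.ne p)⟩
  have hv : ((v.val : ℕ) : ZMod p) = 0 := by
    rwa [ZMod.natCast_val, show ((ZMod.cast v : ZMod p)) = cm p v from rfl]
  rw [ZMod.natCast_eq_zero_iff] at hv
  obtain ⟨m, hm⟩ := hv
  refine ⟨(m : ZMod (p^2)), ?_⟩
  rw [← ZMod.natCast_zmod_val v, hm]
  push_cast; ring

lemma gcomm_pdiv [NeZero p] (u v : MG p l) : pdiv (gcomm u v) := by
  obtain ⟨h0, h1, h2, h3⟩ := cm_gcomm u v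
  obtain ⟨a, ha⟩ := exists_of_cm_eq_zero _ h0
  obtain ⟨b, hb⟩ := exists_of_cm_eq_zero _ h1
  obtain ⟨c, hc⟩ := exists_of_cm_eq_zero _ h2
  obtain ⟨d, hd⟩ := exists_of_cm_eq_zero _ h3
  exact ⟨a, b, c, d, by ext <;> assumption⟩

lemma pdiv_central {u : MG p l} (h : pdiv u) (v : MG p l) : u * v = v * u := by
  obtain ⟨a, b, c, d, rfl⟩ := h
  ext
  · show (_ * v).x0 = (v * _).x0
    simp only [mul_x0]
    linear_combination (-(l:ZMod (p^2))*a*v.x3 + (l:ZMod (p^2))*d*v.x0 + a*v.x2 - c*v.x0) * hp2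
  · show (_ * v).x1 = (v * _).x1
    simp only [mul_x1]
    linear_combination (a*v.x3 - d*v.x0) * hp2
  · show (_ * v).x2 = (v * _).x2
    simp only [mul_x2]
    linear_combination (b*v.x2 - c*v.x1) * hp2
  · show (_ * v).x3 = (v * _).x3
    simp only [mul_x3]
    linear_combination (-b*v.x2 + b*v.x3 + c*v.x1 - d*v.x1) * hp2

lemma pdiv_mul {u v : MG p l} (hu : pdiv u) (hv : pdiv v) : pdiv (u * v) := by
  obtain ⟨a0, a1, a2, a3, rfl⟩ := hu
  obtain ⟨w0, w1, w2, w3, rfl⟩ := hv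
  refine ⟨a0 + w0, a1 + w1, a2 + w2, a3 + w3, ?_⟩
  ext
  · show (_ : MG p l).x0 = _
    simp only [mul_x0]
    linear_combination ((l:ZMod (p^2))*a3*(p:ZMod (p^2))*w0 - a2*(p:ZMod (p^2))*w0) * hp2
  · show (_ : MG p l).x1 = _
    simp only [mul_x1]
    linear_combination (-a3*(p:ZMod (p^2))*w0) * hp2
  · show (_ : MG p l).x2 = _
    simp only [mul_x2]
    linear_combination (-a2*(p:ZMod (p^2))*w1) * hp2
  · show (_ : MG p l).x3 = _
    simp only [mul_x3]
    linear_combination (a2*(p:ZMod (p^2))*w1 - a3*(p:ZMod (p^2))*w1) * hp2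

lemma pdiv_inv {u : MG p l} (hu : pdiv u) : pdiv u⁻¹ := by
  obtain ⟨a0, a1, a2, a3, rfl⟩ := hu
  refine ⟨-a0, -a1, -a2, -a3, ?_⟩
  ext
  · show (_ : MG p l).x0 = _
    simp only [inv_x0]
    linear_combination ((l:ZMod (p^2))*a0*a3*(p:ZMod (p^2)) - a0*a2*(p:ZMod (p^2))) * hp2
  · show (_ : MG p l).x1 = _
    simp only [inv_x1]
    linear_combination (-a0*a3*(p:ZMod (p^2))) * hp2
  · show (_ : MG p l).x2 = _
    simp only [inv_x2]
    linear_combination (-a1*a2*(p:ZMod (p^2))) * hp2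
  · show (_ : MG p l).x3 = _
    simp only [inv_x3]
    linear_combination (a1*a2*(p:ZMod (p^2)) - a1*a3*(p:ZMod (p^2))) * hp2

lemma pdiv_one : pdiv (1 : MG p l) := ⟨0, 0, 0, 0, by ext <;> simp⟩

end
end MG
section GenericGroup
variable {G : Type*} [Group G]

lemma gcomm_eq_one_of_comm {u z : G} (h : u * z = z * u) : gcomm u z = 1 := by
  rw [gcomm, mul_assoc, mul_assoc, h]; group

lemma comm_of_gcomm_eq_one {u z : G} (h : gcomm u z = 1) : u * z = z * u := by
  have h2 : u⁻¹ * z⁻¹ * u * z = 1 := h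
  calc u * z = (z * u) * (u⁻¹ * z⁻¹ * u * z) := by group
  _ = z * u := by rw [h2, mul_one]

lemma mul_eq_mul_swap (x y : G) : x * y = y * x * gcomm x y := by
  rw [gcomm]; group

lemma pow_comm_of_comm {c g : G} (h : c * g = g * c) (m : ℕ) : c ^ m * g = g * c ^ m :=
  ((show Commute c g from h).pow_left m).eq

lemma gcomm_mul_right {x y : G} (hc : ∀ g, gcomm x y * g = g * gcomm x y) (z : G) :
    gcomm x (y * z) = gcomm x z * gcomm x y := by
  have base : gcomm x (y * z) = gcomm x z * (z⁻¹ * (gcomm x y * z)) := by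
    simp only [gcomm]; group
  rw [base, hc z]; group

lemma gcomm_mul_left {x z : G} (hc : ∀ g, gcomm x z * g = g * gcomm x z) (y : G) :
    gcomm (x * y) z = gcomm y z * gcomm x z := by
  have base : gcomm (x * y) z = y⁻¹ * (gcomm x z * (z⁻¹ * y * z)) := by
    simp only [gcomm]; group
  rw [base, hc (z⁻¹ * y * z)]
  rw [gcomm, gcomm]; group

lemma gcomm_inv_left {x z : G} (hc : ∀ g, gcomm x z * g = g * gcomm x z) :
    gcomm x⁻¹ z = (gcomm x z)⁻¹ := by
  have base : gcomm x⁻¹ z = x * (gcomm x z)⁻¹ * x⁻¹ := by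
    simp only [gcomm]; group
  have hcx : (gcomm x z)⁻¹ * x⁻¹ = x⁻¹ * (gcomm x z)⁻¹ := by
    have := hc x⁻¹
    calc (gcomm x z)⁻¹ * x⁻¹ = (gcomm x z)⁻¹ * x⁻¹ * (gcomm x z * (gcomm x z)⁻¹) := by group
    _ = (gcomm x z)⁻¹ * (x⁻¹ * gcomm x z) * (gcomm x z)⁻¹ := by group
    _ = (gcomm x z)⁻¹ * (gcomm x z * x⁻¹) * (gcomm x z)⁻¹ := by rw [← hc x⁻¹]
    _ = x⁻¹ * (gcomm x z)⁻¹ := by group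
  rw [base, mul_assoc, hcx]; group

lemma gcomm_inv_right {x z : G} (hc : ∀ g, gcomm x z * g = g * gcomm x z) :
    gcomm x z⁻¹ = (gcomm x z)⁻¹ := by
  have base : gcomm x z⁻¹ = z * (gcomm x z)⁻¹ * z⁻¹ := by
    simp only [gcomm]; group
  have hcz : (gcomm x z)⁻¹ * z⁻¹ = z⁻¹ * (gcomm x z)⁻¹ := by
    calc (gcomm x z)⁻¹ * z⁻¹ = (gcomm x z)⁻¹ * z⁻¹ * (gcomm x z * (gcomm x z)⁻¹) := by group
    _ = (gcomm x z)⁻¹ * (z⁻¹ * gcomm x z) * (gcomm x z)⁻¹ := by group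
    _ = (gcomm x z)⁻¹ * (gcomm x z * z⁻¹) * (gcomm x z)⁻¹ := by rw [← hc z⁻¹]
    _ = z⁻¹ * (gcomm x z)⁻¹ := by group
  rw [base, mul_assoc, hcz]; group

lemma gcomm_pow_right {x y : G} (hc : ∀ g, gcomm x y * g = g * gcomm x y) (n : ℕ) :
    gcomm x (y ^ n) = (gcomm x y) ^ n := by
  induction n with
  | zero => simp [gcomm]
  | succ n ih =>
    rw [pow_succ', gcomm_mul_right hc, ih, ← pow_succ, pow_succ']

lemma pow_mul_comm_central {x y : G} (hc : ∀ g, gcomm y x * g = g * gcomm y x) (n : ℕ) :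
    y ^ n * x = x * y ^ n * (gcomm y x) ^ n := by
  induction n with
  | zero => simp
  | succ n ih =>
    have swap : y * x = x * y * gcomm y x := mul_eq_mul_swap y x
    calc y ^ (n+1) * x = y * (y ^ n * x) := by rw [pow_succ']; group
    _ = y * (x * y ^ n * (gcomm y x) ^ n) := by rw [ih]
    _ = (y * x) * y ^ n * (gcomm y x) ^ n := by group
    _ = x * y * gcomm y x * y ^ n * (gcomm y x) ^ n := by rw [swap]
    _ = x * y * (gcomm y x * y ^ n) * (gcomm y x) ^ n := by group
    _ = x * y * (y ^ n * gcomm y x) * (gcomm y x) ^ n := by rw [hc (y ^ n)]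
    _ = x * y ^ (n+1) * (gcomm y x) ^ (n+1) := by rw [pow_succ', pow_succ]; group

lemma mul_pow_central {x y : G} (hc : ∀ g, gcomm y x * g = g * gcomm y x) (n : ℕ) :
    (x * y) ^ n = x ^ n * y ^ n * (gcomm y x) ^ n.choose 2 := by
  induction n with
  | zero => simp
  | succ n ih =>
    have hch : (n+1).choose 2 = n.choose 2 + n := by
      rw [Nat.choose_succ_succ, Nat.choose_one_right, Nat.add_comm]
    have hcp : (gcomm y x) ^ n.choose 2 * x = x * (gcomm y x) ^ n.choose 2 :=
      pow_comm_of_comm (hc x) _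
    have hcy : (gcomm y x) ^ n.choose 2 * y = y * (gcomm y x) ^ n.choose 2 :=
      pow_comm_of_comm (hc y) _
    calc (x * y) ^ (n+1) = (x * y) ^ n * (x * y) := pow_succ _ _
    _ = x ^ n * y ^ n * (gcomm y x) ^ n.choose 2 * (x * y) := by rw [ih]
    _ = x ^ n * (y ^ n * ((gcomm y x) ^ n.choose 2 * x)) * y := by group
    _ = x ^ n * (y ^ n * (x * (gcomm y x) ^ n.choose 2)) * y := by rw [hcp]
    _ = x ^ n * (y ^ n * x) * ((gcomm y x) ^ n.choose 2 * y) := by group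
    _ = x ^ n * (x * y ^ n * (gcomm y x) ^ n) * (y * (gcomm y x) ^ n.choose 2) := by
        rw [pow_mul_comm_central hc n, hcy]
    _ = x ^ (n+1) * y ^ n * ((gcomm y x) ^ n * y) * (gcomm y x) ^ n.choose 2 := by
        rw [pow_succ x]; group
    _ = x ^ (n+1) * y ^ n * (y * (gcomm y x) ^ n) * (gcomm y x) ^ n.choose 2 := by
        rw [pow_comm_of_comm (hc y) n]
    _ = x ^ (n+1) * y ^ (n+1) * (gcomm y x) ^ (n + n.choose 2) := by
        rw [pow_succ y, pow_add]; group
    _ = x ^ (n+1) * y ^ (n+1) * (gcomm y x) ^ (n+1).choose 2 := by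
        rw [hch, Nat.add_comm n (n.choose 2)]

end GenericGroup
namespace MG
variable {p l : ℕ}

lemma class2 [NeZero p] (x y z : MG p l) : gcomm (gcomm x y) z = 1 :=
  gcomm_eq_one_of_comm (pdiv_central (gcomm_pdiv x y) z)

lemma pow_coords (u : MG p l) (n : ℕ) :
    u ^ n = ⟨n * u.x0 + (n.choose 2) * (p:ZMod (p^2)) * (((l:ZMod (p^2)) * u.x3 - u.x2) * u.x0),
      n * u.x1 - (n.choose 2) * (p:ZMod (p^2)) * (u.x3 * u.x0),
      n * u.x2 - (n.choose 2) * (p:ZMod (p^2)) * (u.x2 * u.x1),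
      n * u.x3 + (n.choose 2) * (p:ZMod (p^2)) * ((u.x2 - u.x3) * u.x1)⟩ := by
  induction n with
  | zero => ext <;> simp
  | succ n ih =>
    have hc : (((n+1).choose 2 : ℕ) : ZMod (p^2)) = ((n.choose 2 : ℕ) : ZMod (p^2)) + (n : ℕ) := by
      rw [Nat.choose_succ_succ, Nat.choose_one_right]; push_cast; ring
    rw [pow_succ, ih]
    ext
    · show (_ * u).x0 = _
      simp only [mul_x0]
      rw [hc]
      push_cast
      linear_combination ((l:ZMod (p^2)) * ((n.choose 2 : ℕ) : ZMod (p^2)) * u.x0 * u.x1 * u.x2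
        - (l:ZMod (p^2)) * ((n.choose 2 : ℕ) : ZMod (p^2)) * u.x0 * u.x1 * u.x3
        + ((n.choose 2 : ℕ) : ZMod (p^2)) * u.x0 * u.x1 * u.x2) * hp2
    · show (_ * u).x1 = _
      simp only [mul_x1]
      rw [hc]
      push_cast
      linear_combination (-((n.choose 2 : ℕ) : ZMod (p^2)) * u.x0 * u.x1 * u.x2
        + ((n.choose 2 : ℕ) : ZMod (p^2)) * u.x0 * u.x1 * u.x3) * hp2
    · show (_ * u).x2 = _
      simp only [mul_x2]
      rw [hc]
      push_cast
      linear_combination (((n.choose 2 : ℕ) : ZMod (p^2)) * u.x1^2 * u.x2) * hp2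
    · show (_ * u).x3 = _
      simp only [mul_x3]
      rw [hc]
      push_cast
      linear_combination (-2*((n.choose 2 : ℕ) : ZMod (p^2)) * u.x1^2 * u.x2
        + ((n.choose 2 : ℕ) : ZMod (p^2)) * u.x1^2 * u.x3) * hp2

lemma choose_p (hodd : Odd p) : ((p.choose 2 : ℕ) : ZMod (p^2)) * (p : ZMod (p^2)) = 0 := by
  obtain ⟨k, hk⟩ := hodd
  have h1 : p.choose 2 = p * k := by
    rw [Nat.choose_two_right]
    have h2 : p - 1 = 2 * k := by omega
    rw [h2, Nat.mul_div_assoc _ (Dvd.intro k rfl), Nat.mul_div_cancel_left k (by norm_num)]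
  rw [h1]
  push_cast
  linear_combination ((k : ZMod (p^2))) * hp2

lemma pow_p (hodd : Odd p) (u : MG p l) :
    u ^ p = ⟨(p:ZMod (p^2)) * u.x0, (p:ZMod (p^2)) * u.x1,
      (p:ZMod (p^2)) * u.x2, (p:ZMod (p^2)) * u.x3⟩ := by
  rw [pow_coords]
  have hq := choose_p hodd
  ext
  · linear_combination (((l:ZMod (p^2)) * u.x3 - u.x2) * u.x0) * hq
  · linear_combination (-(u.x3 * u.x0)) * hq
  · linear_combination (-(u.x2 * u.x1)) * hq
  · linear_combination ((u.x2 - u.x3) * u.x1) * hq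

def A1 : MG p l := ⟨1,0,0,0⟩
def A2 : MG p l := ⟨0,1,0,0⟩
def B1 : MG p l := ⟨0,0,1,0⟩
def B2 : MG p l := ⟨0,0,0,1⟩

lemma A1_pow (n : ℕ) : (A1 : MG p l) ^ n = ⟨(n : ZMod (p^2)),0,0,0⟩ := by
  rw [pow_coords]; ext <;> simp [A1]
lemma A2_pow (n : ℕ) : (A2 : MG p l) ^ n = ⟨0,(n : ZMod (p^2)),0,0⟩ := by
  rw [pow_coords]; ext <;> simp [A2]
lemma B1_pow (n : ℕ) : (B1 : MG p l) ^ n = ⟨0,0,(n : ZMod (p^2)),0⟩ := by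
  rw [pow_coords]; ext <;> simp [B1]
lemma B2_pow (n : ℕ) : (B2 : MG p l) ^ n = ⟨0,0,0,(n : ZMod (p^2))⟩ := by
  rw [pow_coords]; ext <;> simp [B2]

lemma gcomm_A1_B1 : gcomm (A1 : MG p l) B1 = ⟨(p:ZMod (p^2)),0,0,0⟩ := by
  ext <;> simp [gcomm, A1, B1] <;> ring

lemma gcomm_A1_B1lB2 : gcomm (A1 : MG p l) (B1 ^ l * B2) = ⟨0,(p:ZMod (p^2)),0,0⟩ := by
  rw [B1_pow]
  have : (⟨0,0,(l : ZMod (p^2)),0⟩ * B2 : MG p l) = ⟨0,0,(l : ZMod (p^2)),1⟩ := by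
    ext <;> simp [B2]
  rw [this]
  ext <;> simp [gcomm, A1] <;> ring

lemma gcomm_A2_B1B2 : gcomm (A2 : MG p l) (B1 * B2) = ⟨0,0,(p:ZMod (p^2)),0⟩ := by
  have : (B1 * B2 : MG p l) = ⟨0,0,1,1⟩ := by ext <;> simp [B1, B2]
  rw [this]
  ext <;> simp [gcomm, A2] <;> ring

lemma gcomm_A2_B2 : gcomm (A2 : MG p l) B2 = ⟨0,0,0,(p:ZMod (p^2))⟩ := by
  ext <;> simp [gcomm, A2, B2] <;> ring

lemma gcomm_A1_A2 : gcomm (A1 : MG p l) A2 = 1 := by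
  ext <;> simp [gcomm, A1, A2]

lemma gcomm_B1_B2 : gcomm (B1 : MG p l) B2 = 1 := by
  ext <;> simp [gcomm, B1, B2]

end MG
section Gside
variable (p l : ℕ)

/-- shorthand for generators of the JK group with lam = (l, 1) -/
def ag (i : Fin 4) : JKGroup p (l, 1) := PresentedGroup.of i

lemma rel_mk (r : FreeGroup (Fin 4)) (hr : r ∈ jkRels p (l,1)) :
    PresentedGroup.mk (jkRels p (l,1)) r = 1 := by
  apply (QuotientGroup.eq_one_iff _).mpr
  exact Subgroup.subset_normalClosure hr

lemma mk_gcomm (x y : FreeGroup (Fin 4)) :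
    PresentedGroup.mk (jkRels p (l,1)) (gcomm x y) =
      gcomm (PresentedGroup.mk (jkRels p (l,1)) x) (PresentedGroup.mk (jkRels p (l,1)) y) := by
  simp [gcomm, map_mul, map_inv]

lemma hom_gcomm {G H : Type*} [Group G] [Group H] (φ : G →* H) (x y : G) :
    φ (gcomm x y) = gcomm (φ x) (φ y) := by
  simp [gcomm, map_mul, map_inv]

lemma relc (i j k : Fin 4) :
    gcomm (gcomm (ag p l i) (ag p l j)) (ag p l k) = 1 := by
  have h := rel_mk p l _ (Or.inl ⟨i, j, k, rfl⟩)
  rwa [mk_gcomm, mk_gcomm] at h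

lemma rel1 : (ag p l 0) ^ p = gcomm (ag p l 0) (ag p l 2) := by
  have h := rel_mk p l _ (Or.inr (Set.mem_insert _ _))
  rw [map_mul, map_pow, map_inv, mk_gcomm] at h
  exact mul_inv_eq_one.mp h

lemma rel2 : (ag p l 1) ^ p = gcomm (ag p l 0) ((ag p l 2) ^ l * (ag p l 3)) := by
  have h := rel_mk p l _ (Or.inr (Set.mem_insert_of_mem _ (Set.mem_insert _ _)))
  rw [map_mul, map_pow, map_inv, mk_gcomm, map_mul, map_pow, map_pow] at h
  have h2 := mul_inv_eq_one.mp h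
  simp only [show ((l,1) : ℕ × ℕ).1 = l from rfl, show ((l,1) : ℕ × ℕ).2 = 1 from rfl,
    pow_one] at h2
  exact h2

lemma rel3 : (ag p l 2) ^ p = gcomm (ag p l 1) ((ag p l 2) * (ag p l 3)) := by
  have h := rel_mk p l _ (Or.inr (Set.mem_insert_of_mem _ (Set.mem_insert_of_mem _
    (Set.mem_insert _ _))))
  rw [map_mul, map_pow, map_inv, mk_gcomm, map_mul] at h
  exact mul_inv_eq_one.mp h

lemma rel4 : (ag p l 3) ^ p = gcomm (ag p l 1) (ag p l 3) := by
  have h := rel_mk p l _ (Or.inr (Set.mem_insert_of_mem _ (Set.mem_insert_of_mem _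
    (Set.mem_insert_of_mem _ (Set.mem_insert _ _)))))
  rw [map_mul, map_pow, map_inv, mk_gcomm] at h
  exact mul_inv_eq_one.mp h

lemma rel5 : gcomm (ag p l 0) (ag p l 1) = 1 := by
  have h := rel_mk p l _ (Or.inr (Set.mem_insert_of_mem _ (Set.mem_insert_of_mem _
    (Set.mem_insert_of_mem _ (Set.mem_insert_of_mem _ (Set.mem_insert _ _))))))
  rwa [mk_gcomm] at h

lemma rel6 : gcomm (ag p l 2) (ag p l 3) = 1 := by
  have h := rel_mk p l _ (Or.inr (Set.mem_insert_of_mem _ (Set.mem_insert_of_mem _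
    (Set.mem_insert_of_mem _ (Set.mem_insert_of_mem _ (Set.mem_insert_of_mem _ rfl))))))
  rwa [mk_gcomm] at h

/-- the subgroup generated by commutators of generators -/
def Γ : Subgroup (JKGroup p (l,1)) :=
  Subgroup.closure {g | ∃ i j : Fin 4, g = gcomm (ag p l i) (ag p l j)}

lemma gen_central (i j : Fin 4) (v : JKGroup p (l,1)) :
    gcomm (ag p l i) (ag p l j) * v = v * gcomm (ag p l i) (ag p l j) := by
  have hv : v ∈ Subgroup.centralizer {gcomm (ag p l i) (ag p l j)} := by
    apply PresentedGroup.generated_by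
    intro k
    rw [Subgroup.mem_centralizer_iff]
    intro x hx
    rw [Set.mem_singleton_iff] at hx
    subst hx
    exact comm_of_gcomm_eq_one (relc p l i j k)
  exact Subgroup.mem_centralizer_iff.mp hv _ rfl

lemma gammaCentral {z : JKGroup p (l,1)} (hz : z ∈ Γ p l) :
    ∀ v, z * v = v * z := by
  induction hz using Subgroup.closure_induction with
  | mem x hx => obtain ⟨i, j, rfl⟩ := hx; exact gen_central p l i j
  | one => intro v; rw [one_mul, mul_one]
  | mul x y hx hy ihx ihy =>
      intro v
      rw [mul_assoc, ihy v, ← mul_assoc, ihx v, mul_assoc]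
  | inv x hx ihx =>
      intro v
      calc x⁻¹ * v = x⁻¹ * (v * x) * x⁻¹ := by group
      _ = x⁻¹ * (x * v) * x⁻¹ := by rw [← ihx v]
      _ = v * x⁻¹ := by group

lemma gcomm_mem : ∀ x y : JKGroup p (l,1), gcomm x y ∈ Γ p l := by
  have hrange : ∀ w : JKGroup p (l,1),
      w ∈ Subgroup.closure (Set.range (PresentedGroup.of : Fin 4 → JKGroup p (l,1))) := by
    intro w
    rw [PresentedGroup.closure_range_of]
    exact Subgroup.mem_top w
  have inner : ∀ (i : Fin 4) (y : JKGroup p (l,1)), gcomm (ag p l i) y ∈ Γ p l := by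
    intro i y
    induction hrange y using Subgroup.closure_induction with
    | mem x hx =>
        obtain ⟨j, rfl⟩ := hx
        exact Subgroup.subset_closure ⟨i, j, rfl⟩
    | one =>
        have : gcomm (ag p l i) (1 : JKGroup p (l,1)) = 1 := by simp [gcomm]
        rw [this]; exact one_mem _
    | mul y z hy hz ihy ihz =>
        rw [gcomm_mul_right (fun g => gammaCentral p l ihy g) z]
        exact mul_mem ihz ihy
    | inv y hy ihy =>
        rw [gcomm_inv_right (fun g => gammaCentral p l ihy g)]
        exact inv_mem ihy
  intro x y
  induction hrange x using Subgroup.closure_induction with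
  | mem x hx => obtain ⟨i, rfl⟩ := hx; exact inner i y
  | one =>
      have : gcomm (1 : JKGroup p (l,1)) y = 1 := by simp [gcomm]
      rw [this]; exact one_mem _
  | mul a b ha hb iha ihb =>
      rw [gcomm_mul_left (fun g => gammaCentral p l iha g) b]
      exact mul_mem ihb iha
  | inv a ha iha =>
      rw [gcomm_inv_left (fun g => gammaCentral p l iha g)]
      exact inv_mem iha

lemma gen_pow_mem : ∀ i : Fin 4, (ag p l i) ^ p ∈ Γ p l := by
  intro i
  fin_cases i
  · show (ag p l 0) ^ p ∈ Γ p l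
    rw [rel1]; exact gcomm_mem p l _ _
  · show (ag p l 1) ^ p ∈ Γ p l
    rw [rel2]; exact gcomm_mem p l _ _
  · show (ag p l 2) ^ p ∈ Γ p l
    rw [rel3]; exact gcomm_mem p l _ _
  · show (ag p l 3) ^ p ∈ Γ p l
    rw [rel4]; exact gcomm_mem p l _ _

lemma gamma_exp {z : JKGroup p (l,1)} (hz : z ∈ Γ p l) : z ^ p = 1 := by
  induction hz using Subgroup.closure_induction with
  | mem x hx =>
      obtain ⟨i, j, rfl⟩ := hx
      rw [← gcomm_pow_right (gen_central p l i j) p]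
      exact gcomm_eq_one_of_comm (gammaCentral p l (gen_pow_mem p l j) (ag p l i)).symm
  | one => exact one_pow p
  | mul x y hx hy ihx ihy =>
      rw [(show Commute x y from gammaCentral p l hx y).mul_pow, ihx, ihy, one_mul]
  | inv x hx ihx =>
      rw [inv_pow, ihx, inv_one]

lemma pow_p_mem (g : JKGroup p (l,1)) : g ^ p ∈ Γ p l := by
  have hrange : g ∈ Subgroup.closure (Set.range (PresentedGroup.of : Fin 4 → JKGroup p (l,1))) := by
    rw [PresentedGroup.closure_range_of]; exact Subgroup.mem_top g
  induction hrange using Subgroup.closure_induction with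
  | mem x hx => obtain ⟨i, rfl⟩ := hx; exact gen_pow_mem p l i
  | one => rw [one_pow]; exact one_mem _
  | mul a b ha hb iha ihb =>
      rw [mul_pow_central (fun g => gammaCentral p l (gcomm_mem p l b a) g) p]
      exact mul_mem (mul_mem iha ihb) (Subgroup.pow_mem _ (gcomm_mem p l b a) _)
  | inv a ha iha =>
      rw [inv_pow]; exact inv_mem iha

lemma exp_p2 (g : JKGroup p (l,1)) : g ^ (p ^ 2) = 1 := by
  rw [pow_two, pow_mul]
  exact gamma_exp p l (pow_p_mem p l g)

end Gside
section CommHelpers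
variable {G : Type*} [Group G]

lemma inv_pow_form {p : ℕ} (hp0 : 0 < p) {x : G} (hx : x ^ (p^2) = 1) (e : ℕ) :
    (x ^ e)⁻¹ = x ^ (e * (p^2 - 1)) := by
  symm
  apply eq_inv_of_mul_eq_one_left
  have h1 : p^2 - 1 + 1 = p^2 := Nat.succ_pred_eq_of_pos (Nat.one_le_pow _ _ hp0)
  have hee : e * (p^2 - 1) + e = p^2 * e := by
    calc e * (p^2 - 1) + e = e * ((p^2 - 1) + 1) := by ring
    _ = p^2 * e := by rw [h1, Nat.mul_comm]
  rw [← pow_add, hee, pow_mul, hx, one_pow]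

lemma comm_block_mul (hcomm : ∀ u v : G, u * v = v * u) (a b c d : G)
    (i j k m i' j' k' m' : ℕ) :
    (a^i * b^j * c^k * d^m) * (a^i' * b^j' * c^k' * d^m') =
      a^(i+i') * b^(j+j') * c^(k+k') * d^(m+m') := by
  letI : CommGroup G := { (inferInstance : Group G) with mul_comm := hcomm }
  rw [pow_add, pow_add, pow_add, pow_add]
  simp only [mul_comm, mul_assoc, mul_left_comm]

lemma comm_block_inv {p : ℕ} (hcomm : ∀ u v : G, u * v = v * u) (hp0 : 0 < p)
    {a b c d : G} (ha : a^(p^2) = 1) (hb : b^(p^2) = 1) (hc : c^(p^2) = 1) (hd : d^(p^2) = 1)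
    (i j k m : ℕ) :
    (a^i * b^j * c^k * d^m)⁻¹ =
      a^(i*(p^2-1)) * b^(j*(p^2-1)) * c^(k*(p^2-1)) * d^(m*(p^2-1)) := by
  letI : CommGroup G := { (inferInstance : Group G) with mul_comm := hcomm }
  rw [mul_inv_rev, mul_inv_rev, mul_inv_rev, inv_pow_form hp0 ha, inv_pow_form hp0 hb,
    inv_pow_form hp0 hc, inv_pow_form hp0 hd]
  simp only [mul_comm, mul_assoc, mul_left_comm]

end CommHelpers

section NormalForm
variable (p l : ℕ)

instance gammaNormal : (Γ p l).Normal := by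
  constructor
  intro n hn g
  have h : g * n * g⁻¹ = n := by
    rw [← gammaCentral p l hn g]; group
  rw [h]; exact hn

/-- quotient map to the abelianization-mod-Γ -/
def qm : JKGroup p (l,1) →* JKGroup p (l,1) ⧸ Γ p l := QuotientGroup.mk' (Γ p l)

lemma q_exp (v : JKGroup p (l,1) ⧸ Γ p l) : v ^ (p ^ 2) = 1 := by
  obtain ⟨g, rfl⟩ := QuotientGroup.mk_surjective v
  show (qm p l g) ^ (p^2) = 1
  rw [← map_pow, exp_p2 p l g, map_one]

lemma q_comm (w v : JKGroup p (l,1) ⧸ Γ p l) : w * v = v * w := by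
  obtain ⟨x, rfl⟩ := QuotientGroup.mk_surjective w
  obtain ⟨y, rfl⟩ := QuotientGroup.mk_surjective v
  show qm p l x * qm p l y = qm p l y * qm p l x
  rw [← map_mul, ← map_mul]
  apply QuotientGroup.eq.mpr
  rw [show (x*y)⁻¹ * (y*x) = gcomm y x by rw [gcomm]; group]
  exact gcomm_mem p l y x

lemma nfQ (hp0 : 0 < p) (g : JKGroup p (l,1)) :
    ∃ i j k m : ℕ,
      qm p l g = (qm p l (ag p l 0))^i * (qm p l (ag p l 1))^j *
        (qm p l (ag p l 2))^k * (qm p l (ag p l 3))^m := by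
  have hrange : g ∈ Subgroup.closure (Set.range (PresentedGroup.of : Fin 4 → JKGroup p (l,1))) := by
    rw [PresentedGroup.closure_range_of]; exact Subgroup.mem_top g
  induction hrange using Subgroup.closure_induction with
  | mem x hx =>
      obtain ⟨i, rfl⟩ := hx
      fin_cases i
      · exact ⟨1, 0, 0, 0, by simp [ag]⟩
      · exact ⟨0, 1, 0, 0, by simp [ag]⟩
      · exact ⟨0, 0, 1, 0, by simp [ag]⟩
      · exact ⟨0, 0, 0, 1, by simp [ag]⟩
  | one => exact ⟨0, 0, 0, 0, by simp⟩
  | mul a b ha hb iha ihb =>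
      obtain ⟨i, j, k, m, hA⟩ := iha
      obtain ⟨i', j', k', m', hB⟩ := ihb
      refine ⟨i+i', j+j', k+k', m+m', ?_⟩
      rw [map_mul, hA, hB, comm_block_mul (q_comm p l)]
  | inv a ha iha =>
      obtain ⟨i, j, k, m, hA⟩ := iha
      refine ⟨i*(p^2-1), j*(p^2-1), k*(p^2-1), m*(p^2-1), ?_⟩
      rw [map_inv, hA, comm_block_inv (q_comm p l) hp0 (q_exp p l _) (q_exp p l _)
        (q_exp p l _) (q_exp p l _)]

lemma nf (hp0 : 0 < p) (g : JKGroup p (l,1)) :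
    ∃ (i j k m : ℕ) (z : JKGroup p (l,1)), z ∈ Γ p l ∧
      g = (ag p l 0)^i * (ag p l 1)^j * (ag p l 2)^k * (ag p l 3)^m * z := by
  obtain ⟨i, j, k, m, hA⟩ := nfQ p l hp0 g
  set W := (ag p l 0)^i * (ag p l 1)^j * (ag p l 2)^k * (ag p l 3)^m with hW
  have hq : qm p l W = qm p l g := by
    rw [hA, hW, map_mul, map_mul, map_mul, map_pow, map_pow, map_pow, map_pow]
  have hmem : W⁻¹ * g ∈ Γ p l := QuotientGroup.eq.mp hq
  exact ⟨i, j, k, m, W⁻¹ * g, hmem, (mul_inv_cancel_left W g).symm⟩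

end NormalForm
section Theta
variable (p l : ℕ)

def fgen : Fin 4 → MG p l := ![MG.A1, MG.A2, MG.B1, MG.B2]

@[simp] lemma fgen0 : fgen p l 0 = MG.A1 := rfl
@[simp] lemma fgen1 : fgen p l 1 = MG.A2 := rfl
@[simp] lemma fgen2 : fgen p l 2 = MG.B1 := rfl
@[simp] lemma fgen3 : fgen p l 3 = MG.B2 := rfl

lemma hf [NeZero p] : ∀ r ∈ jkRels p (l,1), FreeGroup.lift (fgen p l) r = 1 := by
  intro r hr
  rcases hr with ⟨i,j,k,rfl⟩ | hr
  · rw [hom_gcomm, hom_gcomm]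
    exact MG.class2 _ _ _
  · rcases hr with rfl | rfl | rfl | rfl | rfl | rfl
    · simp only [map_mul, map_pow, map_inv, hom_gcomm, FreeGroup.lift_apply_of, fgen0, fgen2]
      rw [MG.gcomm_A1_B1, MG.A1_pow]
      group
    · simp only [map_mul, map_pow, map_inv, hom_gcomm, FreeGroup.lift_apply_of,
        fgen0, fgen1, fgen2, fgen3,
        show ((l,1) : ℕ × ℕ).1 = l from rfl, show ((l,1) : ℕ × ℕ).2 = 1 from rfl, pow_one]
      rw [MG.gcomm_A1_B1lB2, MG.A2_pow]
      group
    · simp only [map_mul, map_pow, map_inv, hom_gcomm, FreeGroup.lift_apply_of,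
        fgen1, fgen2, fgen3]
      rw [MG.gcomm_A2_B1B2, MG.B1_pow]
      group
    · simp only [map_mul, map_pow, map_inv, hom_gcomm, FreeGroup.lift_apply_of, fgen1, fgen3]
      rw [MG.gcomm_A2_B2, MG.B2_pow]
      group
    · simp only [hom_gcomm, FreeGroup.lift_apply_of, fgen0, fgen1]
      exact MG.gcomm_A1_A2
    · simp only [hom_gcomm, FreeGroup.lift_apply_of, fgen2, fgen3]
      exact MG.gcomm_B1_B2

def θ [NeZero p] : JKGroup p (l,1) →* MG p l := PresentedGroup.toGroup (hf p l)

@[simp] lemma θ_ag [NeZero p] (i : Fin 4) : θ p l (ag p l i) = fgen p l i :=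
  PresentedGroup.toGroup.of _

lemma θ_gamma [NeZero p] {z : JKGroup p (l,1)} (hz : z ∈ Γ p l) : MG.pdiv (θ p l z) := by
  induction hz using Subgroup.closure_induction with
  | mem x hx =>
      obtain ⟨i, j, rfl⟩ := hx
      rw [hom_gcomm]
      exact MG.gcomm_pdiv _ _
  | one => rw [map_one]; exact MG.pdiv_one
  | mul x y hx hy ihx ihy => rw [map_mul]; exact MG.pdiv_mul ihx ihy
  | inv x hx ihx => rw [map_inv]; exact MG.pdiv_inv ihx

lemma block_val (i j k m : ℕ) :
    (MG.A1^i * MG.A2^j * MG.B1^k * MG.B2^m : MG p l) =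
      ⟨(i : ZMod (p^2)), (j : ZMod (p^2)), (k : ZMod (p^2)), (m : ZMod (p^2))⟩ := by
  rw [MG.A1_pow, MG.A2_pow, MG.B1_pow, MG.B2_pow]
  ext <;> simp

lemma block_mul_pdiv (i j k m : ℕ) (a b c d : ZMod (p^2)) :
    (⟨(i : ZMod (p^2)), (j : ZMod (p^2)), (k : ZMod (p^2)), (m : ZMod (p^2))⟩ : MG p l) *
      ⟨(p:ZMod (p^2))*a, (p:ZMod (p^2))*b, (p:ZMod (p^2))*c, (p:ZMod (p^2))*d⟩ =
    ⟨(i : ZMod (p^2)) + (p:ZMod (p^2))*a, (j : ZMod (p^2)) + (p:ZMod (p^2))*b,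
      (k : ZMod (p^2)) + (p:ZMod (p^2))*c, (m : ZMod (p^2)) + (p:ZMod (p^2))*d⟩ := by
  ext
  · show _ = _
    simp only [MG.mul_x0]
    linear_combination ((l:ZMod (p^2)) * a * (m : ZMod (p^2)) - a * (k : ZMod (p^2))) * MG.hp2
  · show _ = _
    simp only [MG.mul_x1]
    linear_combination (-(a * (m : ZMod (p^2)))) * MG.hp2
  · show _ = _
    simp only [MG.mul_x2]
    linear_combination (-(b * (k : ZMod (p^2)))) * MG.hp2
  · show _ = _
    simp only [MG.mul_x3]
    linear_combination (b * (k : ZMod (p^2)) - b * (m : ZMod (p^2))) * MG.hp2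

lemma gamma_le_center : Γ p l ≤ Subgroup.center (JKGroup p (l,1)) := by
  intro z hz
  exact Subgroup.mem_center_iff.mpr (fun g => (gammaCentral p l hz g).symm)

lemma dvd_of_mul_cast_zero (hp' : p ≠ 0) (i : ℕ)
    (h : (p:ZMod (p^2)) * (i : ZMod (p^2)) = 0) : p ∣ i := by
  have h2 : ((p * i : ℕ) : ZMod (p^2)) = 0 := by push_cast; linear_combination h
  rw [ZMod.natCast_eq_zero_iff, pow_two] at h2
  exact (mul_dvd_mul_iff_left hp').mp h2

lemma central_of_pow_p_eq_one [NeZero p] (hodd : Odd p) (hp' : p ≠ 0)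
    (g : JKGroup p (l,1)) (hg : g ^ p = 1) :
    g ∈ Subgroup.center (JKGroup p (l,1)) := by
  have hp0 : 0 < p := Nat.pos_of_ne_zero hp'
  obtain ⟨i, j, k, m, z, hz, rfl⟩ := nf p l hp0 g
  obtain ⟨a, b, c, d, hzv⟩ := θ_gamma p l hz
  have hθ : (θ p l ((ag p l 0)^i * (ag p l 1)^j * (ag p l 2)^k * (ag p l 3)^m * z)) ^ p = 1 := by
    rw [← map_pow, hg, map_one]
  rw [map_mul, map_mul, map_mul, map_mul, map_pow, map_pow, map_pow, map_pow,
    θ_ag, θ_ag, θ_ag, θ_ag, fgen0, fgen1, fgen2, fgen3, block_val, hzv,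
    block_mul_pdiv, MG.pow_p hodd] at hθ
  have h0 : (p:ZMod (p^2)) * ((i : ZMod (p^2)) + (p:ZMod (p^2))*a) = 0 := by
    have := congrArg MG.x0 hθ; simpa using this
  have h1 : (p:ZMod (p^2)) * ((j : ZMod (p^2)) + (p:ZMod (p^2))*b) = 0 := by
    have := congrArg MG.x1 hθ; simpa using this
  have h2 : (p:ZMod (p^2)) * ((k : ZMod (p^2)) + (p:ZMod (p^2))*c) = 0 := by
    have := congrArg MG.x2 hθ; simpa using this
  have h3 : (p:ZMod (p^2)) * ((m : ZMod (p^2)) + (p:ZMod (p^2))*d) = 0 := by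
    have := congrArg MG.x3 hθ; simpa using this
  have di : p ∣ i := dvd_of_mul_cast_zero p hp' i (by linear_combination h0 - a * MG.hp2)
  have dj : p ∣ j := dvd_of_mul_cast_zero p hp' j (by linear_combination h1 - b * MG.hp2)
  have dk : p ∣ k := dvd_of_mul_cast_zero p hp' k (by linear_combination h2 - c * MG.hp2)
  have dm : p ∣ m := dvd_of_mul_cast_zero p hp' m (by linear_combination h3 - d * MG.hp2)
  apply gamma_le_center p l
  obtain ⟨i0, rfl⟩ := di
  obtain ⟨j0, rfl⟩ := dj
  obtain ⟨k0, rfl⟩ := dk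
  obtain ⟨m0, rfl⟩ := dm
  rw [pow_mul (ag p l 0) p i0, pow_mul (ag p l 1) p j0,
    pow_mul (ag p l 2) p k0, pow_mul (ag p l 3) p m0]
  exact mul_mem (mul_mem (mul_mem (mul_mem
    (Subgroup.pow_mem _ (gen_pow_mem p l 0) i0)
    (Subgroup.pow_mem _ (gen_pow_mem p l 1) j0))
    (Subgroup.pow_mem _ (gen_pow_mem p l 2) k0))
    (Subgroup.pow_mem _ (gen_pow_mem p l 3) m0)) hz

end Theta
end JKP

theorem stmt_4 (p : ℕ) (hp : p.Prime) (hodd : Odd p) (lam₁ : ℕ) (hlam₁ : lam₁ ≤ p - 1)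
    (g : JKGroup p (lam₁, 1)) (hg : g ∉ Subgroup.center (JKGroup p (lam₁, 1))) :
    orderOf g = p ^ 2 := by
  haveI : NeZero p := ⟨hp.ne_zero⟩
  have h1 : g ^ p ≠ 1 := fun hh =>
    hg (JKP.central_of_pow_p_eq_one p lam₁ hodd hp.ne_zero g hh)
  have h2 : g ^ (p^2) = 1 := JKP.exp_p2 p lam₁ g
  have hdvd := orderOf_dvd_of_pow_eq_one h2
  rcases (Nat.dvd_prime_pow hp).mp hdvd with ⟨k, hk, hko⟩
  interval_cases k
  · rw [pow_zero, orderOf_eq_one_iff] at hko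
    subst hko
    exact absurd (Subgroup.one_mem _) hg
  · rw [pow_one] at hko
    have := pow_orderOf_eq_one g
    rw [hko] at this
    exact absurd this h1
  · exact hko
end

section
/- Let p be an odd prime and λ = (λ₁, λ₂) ∈ {(1,0)} ∪ {(i,1) : 0 ≤ i ≤ p−1}. For integers k₁, k₂, l₁, l₂ and K₁, K₂, L₁, L₂, the elements u = a₁^{k₁}a₂^{k₂}b₁^{l₁}b₂^{l₂} and v = a₁^{K₁}a₂^{K₂}b₁^{L₁}b₂^{L₂} of G_λ^(p) commute if and only if at least one of the following holds modulo p: (k₁,k₂,l₁,l₂) ≡ (0,0,0,0); or (K₁,K₂,L₁,L₂) ≡ (0,0,0,0); or l₁ ≡ l₂ ≡ L₁ ≡ L₂ ≡ 0; or k₁ ≡ k₂ ≡ K₁ ≡ K₂ ≡ 0; or there exists an integer n with (K₁,K₂,L₁,L₂) ≡ n·(k₁,k₂,l₁,l₂) componentwise modulo p. -/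
section Helpers
variable {G : Type*} [Group G]

lemma mul_eq_gcomm (x y : G) : x * y = y * x * gcomm x y := by
  simp only [gcomm]; group

lemma commute_of_gcomm_eq_one {x y : G} (h : gcomm x y = 1) : Commute x y := by
  have := mul_eq_gcomm x y
  rw [h, mul_one] at this
  exact this

lemma gcomm_eq_one_of_commute {x y : G} (h : Commute x y) : gcomm x y = 1 := by
  have h2 := mul_eq_gcomm x y
  rw [h.eq] at h2
  exact (mul_left_cancel (a := y * x) (b := (1:G)) (c := gcomm x y)
    (by rw [mul_one]; exact h2)).symm

lemma swap_one {x y z : G} (hz : ∀ w : G, Commute z w)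
    (h : x * y = y * x * z) : ∀ n : ℤ, x * y ^ n = y ^ n * x * z ^ n := by
  intro n
  have hyx : y * x = x * y * z⁻¹ := by rw [h]; group
  have hconj : x⁻¹ * y * x = y * z⁻¹ := by
    calc x⁻¹ * y * x = x⁻¹ * (y * x) := by group
    _ = x⁻¹ * (x * y * z⁻¹) := by rw [hyx]
    _ = y * z⁻¹ := by group
  have e1 : x⁻¹ * y ^ n * x = y ^ n * z⁻¹ ^ n := by
    calc x⁻¹ * y ^ n * x = x⁻¹ * y ^ n * x⁻¹⁻¹ := by rw [inv_inv]
    _ = (x⁻¹ * y * x⁻¹⁻¹) ^ n := by rw [conj_zpow]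
    _ = (x⁻¹ * y * x) ^ n := by rw [inv_inv]
    _ = (y * z⁻¹) ^ n := by rw [hconj]
    _ = y ^ n * z⁻¹ ^ n := (((hz y).symm.inv_right).mul_zpow n)
  have e2 : y ^ n * x = x * y ^ n * z⁻¹ ^ n := by
    calc y ^ n * x = x * (x⁻¹ * y ^ n * x) := by group
    _ = x * (y ^ n * z⁻¹ ^ n) := by rw [e1]
    _ = x * y ^ n * z⁻¹ ^ n := by group
  calc x * y ^ n = x * y ^ n * z⁻¹ ^ n * z ^ n := by group
  _ = y ^ n * x * z ^ n := by rw [← e2]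

lemma swap_zpow {x y z : G} (hz : ∀ w : G, Commute z w)
    (h : x * y = y * x * z) (m n : ℤ) : x ^ m * y ^ n = y ^ n * x ^ m * z ^ (m * n) := by
  have e1 : y ^ n * x = x * y ^ n * (z ^ n)⁻¹ := by
    have := swap_one hz h n
    rw [this]; group
  have hz' : ∀ w : G, Commute ((z ^ n)⁻¹) w := fun w => ((hz w).zpow_left n).inv_left
  have := swap_one hz' e1 m
  -- y ^ n * x ^ m = x ^ m * y ^ n * ((z ^ n)⁻¹) ^ m
  rw [this]
  have : ((z ^ n)⁻¹) ^ m = (z ^ (m * n))⁻¹ := by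
    rw [← zpow_neg, ← zpow_mul, ← zpow_neg]; ring_nf
  rw [this]; group

-- gcomm of powers
lemma gcomm_zpow_right {x y : G} (hz : ∀ w : G, Commute (gcomm x y) w) (n : ℤ) :
    gcomm x (y ^ n) = gcomm x y ^ n := by
  have h1 : x * y ^ n = y ^ n * x * gcomm x y ^ n := by
    have := swap_zpow hz (mul_eq_gcomm x y) 1 n
    simpa using this
  have h2 := mul_eq_gcomm x (y ^ n)
  rw [h1] at h2
  exact (mul_left_cancel h2).symm

lemma gcomm_mul_right {x y w : G} (hy : ∀ u : G, Commute (gcomm x y) u)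
    (hw : ∀ u : G, Commute (gcomm x w) u) :
    gcomm x (y * w) = gcomm x y * gcomm x w := by
  have key : x * (y * w) = (y * w) * x * (gcomm x y * gcomm x w) := by
    calc x * (y * w) = (x * y) * w := by group
    _ = y * x * gcomm x y * w := by rw [mul_eq_gcomm x y]
    _ = y * (x * w) * gcomm x y := by rw [mul_assoc (y * x), (hy w).eq]; group
    _ = y * (w * x * gcomm x w) * gcomm x y := by rw [mul_eq_gcomm x w]
    _ = (y * w) * x * (gcomm x y * gcomm x w) := by rw [(hy (gcomm x w)).eq]; group
  have h2 := mul_eq_gcomm x (y * w)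
  rw [key] at h2
  exact (mul_left_cancel h2).symm

end Helpers

section Key
variable {G : Type*} [Group G] {g0 g1 g2 g3 : G}

lemma move_zpow {x y z : G} (hz : ∀ w : G, Commute z w)
    (h : x * y = y * x * z) (m n : ℤ) : y ^ n * x ^ m = x ^ m * y ^ n * z ^ (-(m * n)) := by
  have h' : y * x = x * y * z⁻¹ := by rw [h]; group
  have := swap_zpow (fun w => (hz w).inv_left) h' n m
  rw [this]
  have : (z⁻¹) ^ (n * m) = z ^ (-(m * n)) := by
    rw [inv_zpow, ← zpow_neg]; ring_nf
  rw [this]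

lemma blockBA
    (hc1 : ∀ w : G, Commute (gcomm g0 g2) w) (hc2 : ∀ w : G, Commute (gcomm g0 g3) w)
    (hc3 : ∀ w : G, Commute (gcomm g1 g2) w) (hc4 : ∀ w : G, Commute (gcomm g1 g3) w)
    (l1 l2 K1 K2 : ℤ) :
    (g2 ^ l1 * g3 ^ l2) * (g0 ^ K1 * g1 ^ K2) =
    (g0 ^ K1 * g1 ^ K2) * (g2 ^ l1 * g3 ^ l2) *
      ((gcomm g0 g2) ^ (-(K1*l1)) * (gcomm g0 g3) ^ (-(K1*l2)) *
       (gcomm g1 g2) ^ (-(K2*l1)) * (gcomm g1 g3) ^ (-(K2*l2))) := by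
  set a := g0 ^ K1 with ha
  set b := g1 ^ K2 with hb
  set u := g2 ^ l1 with hu
  set w := g3 ^ l2 with hw
  set P1 := (gcomm g0 g2) ^ (-(K1*l1)) with hP1d
  set P2 := (gcomm g0 g3) ^ (-(K1*l2)) with hP2d
  set P3 := (gcomm g1 g2) ^ (-(K2*l1)) with hP3d
  set P4 := (gcomm g1 g3) ^ (-(K2*l2)) with hP4d
  have m02 : u * a = a * u * P1 := move_zpow hc1 (mul_eq_gcomm g0 g2) K1 l1
  have m03 : w * a = a * w * P2 := move_zpow hc2 (mul_eq_gcomm g0 g3) K1 l2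
  have m12 : u * b = b * u * P3 := move_zpow hc3 (mul_eq_gcomm g1 g2) K2 l1
  have m13 : w * b = b * w * P4 := move_zpow hc4 (mul_eq_gcomm g1 g3) K2 l2
  have hP1 : ∀ v : G, P1 * v = v * P1 := fun v => ((hc1 v).zpow_left _).eq
  have hP2 : ∀ v : G, P2 * v = v * P2 := fun v => ((hc2 v).zpow_left _).eq
  have hP3 : ∀ v : G, P3 * v = v * P3 := fun v => ((hc3 v).zpow_left _).eq
  have hP4 : ∀ v : G, P4 * v = v * P4 := fun v => ((hc4 v).zpow_left _).eq
  calc (u * w) * (a * b)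
      = u * (w * a) * b := by group
    _ = u * (a * w * P2) * b := by rw [m03]
    _ = (u * a) * w * (P2 * b) := by group
    _ = (a * u * P1) * w * (b * P2) := by rw [m02, hP2 b]
    _ = a * u * (P1 * w) * (b * P2) := by group
    _ = a * u * (w * P1) * (b * P2) := by rw [hP1 w]
    _ = a * u * w * (P1 * b) * P2 := by group
    _ = a * u * w * (b * P1) * P2 := by rw [hP1 b]
    _ = a * u * (w * b) * (P1 * P2) := by group
    _ = a * u * (b * w * P4) * (P1 * P2) := by rw [m13]
    _ = a * (u * b) * w * (P4 * (P1 * P2)) := by group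
    _ = a * (b * u * P3) * w * (P4 * (P1 * P2)) := by rw [m12]
    _ = (a * b) * (u * (P3 * w)) * (P4 * (P1 * P2)) := by group
    _ = (a * b) * (u * (w * P3)) * (P4 * (P1 * P2)) := by rw [hP3 w]
    _ = (a * b) * (u * w) * (P3 * ((P4 * P1) * P2)) := by group
    _ = (a * b) * (u * w) * (P3 * ((P1 * P4) * P2)) := by rw [← hP1 P4]
    _ = (a * b) * (u * w) * ((P3 * P1) * (P4 * P2)) := by group
    _ = (a * b) * (u * w) * ((P1 * P3) * (P4 * P2)) := by rw [← hP1 P3]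
    _ = (a * b) * (u * w) * (P1 * (P3 * (P4 * P2))) := by group
    _ = (a * b) * (u * w) * (P1 * (P3 * (P2 * P4))) := by rw [← hP2 P4]
    _ = (a * b) * (u * w) * (P1 * ((P3 * P2) * P4)) := by group
    _ = (a * b) * (u * w) * (P1 * ((P2 * P3) * P4)) := by rw [← hP2 P3]
    _ = (a * b) * (u * w) * (P1 * P2 * P3 * P4) := by group

lemma blockAA (h01 : Commute g0 g1) (k1 k2 K1 K2 : ℤ) :
    (g0 ^ k1 * g1 ^ k2) * (g0 ^ K1 * g1 ^ K2) = g0 ^ (k1 + K1) * g1 ^ (k2 + K2) := by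
  calc (g0 ^ k1 * g1 ^ k2) * (g0 ^ K1 * g1 ^ K2)
      = g0 ^ k1 * (g1 ^ k2 * g0 ^ K1) * g1 ^ K2 := by group
    _ = g0 ^ k1 * (g0 ^ K1 * g1 ^ k2) * g1 ^ K2 := by rw [(h01.symm.zpow_zpow k2 K1).eq]
    _ = g0 ^ (k1 + K1) * g1 ^ (k2 + K2) := by group

end Key

section Key2
variable {G : Type*} [Group G] {g0 g1 g2 g3 : G}

lemma prod4_mul (c₁ c₂ c₃ c₄ : G)
    (h1 : ∀ w : G, Commute c₁ w) (h2 : ∀ w : G, Commute c₂ w) (h3 : ∀ w : G, Commute c₃ w)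
    (e1 e2 e3 e4 f1 f2 f3 f4 : ℤ) :
    (c₁^e1 * c₂^e2 * c₃^e3 * c₄^e4) * (c₁^f1 * c₂^f2 * c₃^f3 * c₄^f4) =
    c₁^(e1+f1) * c₂^(e2+f2) * c₃^(e3+f3) * c₄^(e4+f4) := by
  have s1 : ∀ (v : G) (n : ℤ), v * c₁^n = c₁^n * v := fun v n => ((h1 v).zpow_left n).eq.symm
  have s2 : ∀ (v : G) (n : ℤ), v * c₂^n = c₂^n * v := fun v n => ((h2 v).zpow_left n).eq.symm
  have s3 : ∀ (v : G) (n : ℤ), v * c₃^n = c₃^n * v := fun v n => ((h3 v).zpow_left n).eq.symm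
  calc (c₁^e1 * c₂^e2 * c₃^e3 * c₄^e4) * (c₁^f1 * c₂^f2 * c₃^f3 * c₄^f4)
      = c₁^e1 * c₂^e2 * c₃^e3 * (c₄^e4 * c₁^f1) * (c₂^f2 * (c₃^f3 * c₄^f4)) := by group
    _ = c₁^e1 * c₂^e2 * (c₃^e3 * c₁^f1) * c₄^e4 * (c₂^f2 * (c₃^f3 * c₄^f4)) := by
        rw [s1 (c₄^e4) f1]; group
    _ = c₁^e1 * (c₂^e2 * c₁^f1) * c₃^e3 * c₄^e4 * (c₂^f2 * (c₃^f3 * c₄^f4)) := by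
        rw [s1 (c₃^e3) f1]; group
    _ = (c₁^e1 * c₁^f1) * c₂^e2 * c₃^e3 * (c₄^e4 * c₂^f2) * (c₃^f3 * c₄^f4) := by
        rw [s1 (c₂^e2) f1]; group
    _ = (c₁^e1 * c₁^f1) * c₂^e2 * (c₃^e3 * c₂^f2) * c₄^e4 * (c₃^f3 * c₄^f4) := by
        rw [s2 (c₄^e4) f2]; group
    _ = (c₁^e1 * c₁^f1) * (c₂^e2 * c₂^f2) * c₃^e3 * (c₄^e4 * c₃^f3) * c₄^f4 := by
        rw [s2 (c₃^e3) f2]; group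
    _ = (c₁^e1 * c₁^f1) * (c₂^e2 * c₂^f2) * (c₃^e3 * c₃^f3) * (c₄^e4 * c₄^f4) := by
        rw [s3 (c₄^e4) f3]; group
    _ = c₁^(e1+f1) * c₂^(e2+f2) * c₃^(e3+f3) * c₄^(e4+f4) := by group

lemma nf_form
    (hc1 : ∀ w : G, Commute (gcomm g0 g2) w) (hc2 : ∀ w : G, Commute (gcomm g0 g3) w)
    (hc3 : ∀ w : G, Commute (gcomm g1 g2) w) (hc4 : ∀ w : G, Commute (gcomm g1 g3) w)
    (h01 : Commute g0 g1) (h23 : Commute g2 g3)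
    (k1 k2 l1 l2 K1 K2 L1 L2 : ℤ) :
    (g0^k1 * g1^k2 * g2^l1 * g3^l2) * (g0^K1 * g1^K2 * g2^L1 * g3^L2) =
    (g0^(k1+K1) * g1^(k2+K2) * g2^(l1+L1) * g3^(l2+L2)) *
      ((gcomm g0 g2)^(-(K1*l1)) * (gcomm g0 g3)^(-(K1*l2)) *
       (gcomm g1 g2)^(-(K2*l1)) * (gcomm g1 g3)^(-(K2*l2))) := by
  have hT : ∀ v : G, Commute ((gcomm g0 g2)^(-(K1*l1)) * (gcomm g0 g3)^(-(K1*l2)) *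
      (gcomm g1 g2)^(-(K2*l1)) * (gcomm g1 g3)^(-(K2*l2))) v := fun v =>
    ((((hc1 v).zpow_left _).mul_left ((hc2 v).zpow_left _)).mul_left
      ((hc3 v).zpow_left _)).mul_left ((hc4 v).zpow_left _)
  calc (g0^k1 * g1^k2 * g2^l1 * g3^l2) * (g0^K1 * g1^K2 * g2^L1 * g3^L2)
      = (g0^k1 * g1^k2) * ((g2^l1 * g3^l2) * (g0^K1 * g1^K2)) * (g2^L1 * g3^L2) := by group
    _ = (g0^k1 * g1^k2) * ((g0^K1 * g1^K2) * (g2^l1 * g3^l2) *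
          ((gcomm g0 g2)^(-(K1*l1)) * (gcomm g0 g3)^(-(K1*l2)) *
           (gcomm g1 g2)^(-(K2*l1)) * (gcomm g1 g3)^(-(K2*l2)))) * (g2^L1 * g3^L2) := by
        rw [blockBA hc1 hc2 hc3 hc4 l1 l2 K1 K2]
    _ = ((g0^k1 * g1^k2) * (g0^K1 * g1^K2)) * ((g2^l1 * g3^l2) *
          (((gcomm g0 g2)^(-(K1*l1)) * (gcomm g0 g3)^(-(K1*l2)) *
           (gcomm g1 g2)^(-(K2*l1)) * (gcomm g1 g3)^(-(K2*l2))) * (g2^L1 * g3^L2))) := by group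
    _ = ((g0^k1 * g1^k2) * (g0^K1 * g1^K2)) * ((g2^l1 * g3^l2) * ((g2^L1 * g3^L2) *
          ((gcomm g0 g2)^(-(K1*l1)) * (gcomm g0 g3)^(-(K1*l2)) *
           (gcomm g1 g2)^(-(K2*l1)) * (gcomm g1 g3)^(-(K2*l2))))) := by rw [(hT _).eq]
    _ = ((g0^k1 * g1^k2) * (g0^K1 * g1^K2)) * ((g2^l1 * g3^l2) * (g2^L1 * g3^L2)) *
          ((gcomm g0 g2)^(-(K1*l1)) * (gcomm g0 g3)^(-(K1*l2)) *
           (gcomm g1 g2)^(-(K2*l1)) * (gcomm g1 g3)^(-(K2*l2))) := by group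
    _ = (g0^(k1+K1) * g1^(k2+K2)) * (g2^(l1+L1) * g3^(l2+L2)) *
          ((gcomm g0 g2)^(-(K1*l1)) * (gcomm g0 g3)^(-(K1*l2)) *
           (gcomm g1 g2)^(-(K2*l1)) * (gcomm g1 g3)^(-(K2*l2))) := by
        rw [blockAA h01, blockAA h23]
    _ = (g0^(k1+K1) * g1^(k2+K2) * g2^(l1+L1) * g3^(l2+L2)) *
          ((gcomm g0 g2)^(-(K1*l1)) * (gcomm g0 g3)^(-(K1*l2)) *
           (gcomm g1 g2)^(-(K2*l1)) * (gcomm g1 g3)^(-(K2*l2))) := by group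

lemma key_comm
    (hc1 : ∀ w : G, Commute (gcomm g0 g2) w) (hc2 : ∀ w : G, Commute (gcomm g0 g3) w)
    (hc3 : ∀ w : G, Commute (gcomm g1 g2) w) (hc4 : ∀ w : G, Commute (gcomm g1 g3) w)
    (h01 : Commute g0 g1) (h23 : Commute g2 g3)
    (k1 k2 l1 l2 K1 K2 L1 L2 : ℤ) :
    (g0^k1 * g1^k2 * g2^l1 * g3^l2) * (g0^K1 * g1^K2 * g2^L1 * g3^L2) =
    (g0^K1 * g1^K2 * g2^L1 * g3^L2) * (g0^k1 * g1^k2 * g2^l1 * g3^l2) *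
      ((gcomm g0 g2)^(k1*L1 - K1*l1) * (gcomm g0 g3)^(k1*L2 - K1*l2) *
       (gcomm g1 g2)^(k2*L1 - K2*l1) * (gcomm g1 g3)^(k2*L2 - K2*l2)) := by
  rw [nf_form hc1 hc2 hc3 hc4 h01 h23 k1 k2 l1 l2 K1 K2 L1 L2,
      nf_form hc1 hc2 hc3 hc4 h01 h23 K1 K2 L1 L2 k1 k2 l1 l2,
      mul_assoc (g0^(K1+k1) * g1^(K2+k2) * g2^(L1+l1) * g3^(L2+l2)),
      prod4_mul _ _ _ _ hc1 hc2 hc3]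
  ring_nf

end Key2



section Model
variable (p : ℕ)

abbrev Zp2four (p : ℕ) := ZMod (p^2) × ZMod (p^2) × ZMod (p^2) × ZMod (p^2)
abbrev Zpfour (p : ℕ) := ZMod p × ZMod p × ZMod p × ZMod p

def rp (p : ℕ) : ZMod (p^2) →+* ZMod p :=
  ZMod.castHom (dvd_pow_self p two_ne_zero) (ZMod p)

def betaT (x y : Zp2four p) : Zpfour p :=
  (rp p x.1 * rp p y.2.2.1, rp p x.1 * rp p y.2.2.2,
   rp p x.2.1 * rp p y.2.2.1, rp p x.2.1 * rp p y.2.2.2)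

def Tc (p : ℕ) := Zp2four p × Zpfour p

namespace Tc

variable {p}

lemma ext' {a b : Tc p} (h1 : a.1.1 = b.1.1) (h2 : a.1.2.1 = b.1.2.1)
    (h3 : a.1.2.2.1 = b.1.2.2.1) (h4 : a.1.2.2.2 = b.1.2.2.2)
    (h5 : a.2.1 = b.2.1) (h6 : a.2.2.1 = b.2.2.1)
    (h7 : a.2.2.2.1 = b.2.2.2.1) (h8 : a.2.2.2.2 = b.2.2.2.2) : a = b :=
  Prod.ext (Prod.ext h1 (Prod.ext h2 (Prod.ext h3 h4)))
    (Prod.ext h5 (Prod.ext h6 (Prod.ext h7 h8)))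

variable (p)

instance : One (Tc p) := ⟨((0:Zp2four p), (0:Zpfour p))⟩
instance : Mul (Tc p) := ⟨fun a b => (a.1 + b.1, a.2 + b.2 + betaT p a.1 b.1)⟩
instance : Inv (Tc p) := ⟨fun a => (-a.1, -a.2 + betaT p a.1 a.1)⟩

lemma mul_def (a b : Tc p) : a * b = (a.1 + b.1, a.2 + b.2 + betaT p a.1 b.1) := rfl
lemma one_def : (1 : Tc p) = ((0:Zp2four p), (0:Zpfour p)) := rfl
lemma inv_def (a : Tc p) : a⁻¹ = (-a.1, -a.2 + betaT p a.1 a.1) := rfl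
lemma mul_def' (a b : Zp2four p × Zpfour p) :
    @HMul.hMul (Tc p) (Tc p) (Tc p) _ a b = (a.1 + b.1, a.2 + b.2 + betaT p a.1 b.1) := rfl
lemma inv_def' (a : Zp2four p × Zpfour p) :
    @Inv.inv (Tc p) _ a = (-a.1, -a.2 + betaT p a.1 a.1) := rfl

instance : Group (Tc p) where
  mul := (· * ·)
  one := 1
  inv := (·⁻¹)
  mul_assoc a b c := by
    apply ext' <;>
      simp only [↓mul_def, mul_def', betaT, map_add, Prod.fst_add, Prod.snd_add] <;> ring
  one_mul a := by
    apply ext' <;>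
      simp only [↓mul_def, mul_def', ↓one_def, betaT, map_zero, map_add, Prod.fst_add, Prod.snd_add,
        Prod.fst_zero, Prod.snd_zero] <;> ring
  mul_one a := by
    apply ext' <;>
      simp only [↓mul_def, mul_def', ↓one_def, betaT, map_zero, map_add, Prod.fst_add, Prod.snd_add,
        Prod.fst_zero, Prod.snd_zero] <;> ring
  inv_mul_cancel a := by
    apply ext' <;>
      simp only [↓mul_def, mul_def', ↓inv_def, inv_def', ↓one_def, betaT, map_zero, map_add, map_neg, Prod.fst_add,
        Prod.snd_add, Prod.fst_zero, Prod.snd_zero, Prod.fst_neg, Prod.snd_neg] <;> ring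

lemma gcommT (a b : Tc p) :
    gcomm a b = ((0 : Zp2four p), betaT p a.1 b.1 - betaT p b.1 a.1) := by
  apply ext' <;>
    simp only [gcomm, ↓mul_def, mul_def', ↓inv_def, inv_def', betaT, map_zero, map_add, map_neg, Prod.fst_add,
      Prod.snd_add, Prod.fst_zero, Prod.snd_zero, Prod.fst_neg, Prod.snd_neg,
      Prod.fst_sub, Prod.snd_sub, Prod.mk_sub_mk] <;> ring

lemma beta_zero_left (y : Zp2four p) : betaT p 0 y = 0 := by simp [betaT]

lemma beta_zero_right (y : Zp2four p) : betaT p y 0 = 0 := by simp [betaT]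

lemma class2 (a b c : Tc p) : gcomm (gcomm a b) c = 1 := by
  rw [gcommT, gcommT, one_def]
  simp [beta_zero_left, beta_zero_right]; rfl

-- generators
def A1 : Tc p := ((1,0,0,0), 0)
def A2 : Tc p := ((0,1,0,0), 0)
def B1 : Tc p := ((0,0,1,0), 0)
def B2 : Tc p := ((0,0,0,1), 0)

lemma A1_pow (n : ℕ) : (A1 p)^n = ((((n : ZMod (p^2)),0,0,0) : Zp2four p), 0) := by
  induction n with
  | zero => simp [↓one_def]; rfl
  | succ n ih =>
    rw [pow_succ, ih]
    apply ext' <;> simp [A1, ↓mul_def, mul_def', betaT] <;> push_cast <;> ring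

lemma A2_pow (n : ℕ) : (A2 p)^n = (((0,(n : ZMod (p^2)),0,0) : Zp2four p), 0) := by
  induction n with
  | zero => simp [↓one_def]; rfl
  | succ n ih =>
    rw [pow_succ, ih]
    apply ext' <;> simp [A2, ↓mul_def, mul_def', betaT] <;> push_cast <;> ring

lemma B1_pow (n : ℕ) : (B1 p)^n = (((0,0,(n : ZMod (p^2)),0) : Zp2four p), 0) := by
  induction n with
  | zero => simp [↓one_def]; rfl
  | succ n ih =>
    rw [pow_succ, ih]
    apply ext' <;> simp [B1, ↓mul_def, mul_def', betaT] <;> push_cast <;> ring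

lemma B2_pow (n : ℕ) : (B2 p)^n = (((0,0,0,(n : ZMod (p^2))) : Zp2four p), 0) := by
  induction n with
  | zero => simp [↓one_def]; rfl
  | succ n ih =>
    rw [pow_succ, ih]
    apply ext' <;> simp [B2, ↓mul_def, mul_def', betaT] <;> push_cast <;> ring

end Tc
end Model

section Nsub
variable (p : ℕ) (lam : ℕ × ℕ)

def nmap (t : ℤ × ℤ × ℤ × ℤ) : Tc p :=
  (((((p:ℤ) * t.1 : ℤ) : ZMod (p^2)), (((p:ℤ) * t.2.1 : ℤ) : ZMod (p^2)),
    (((p:ℤ) * t.2.2.1 : ℤ) : ZMod (p^2)), (((p:ℤ) * t.2.2.2 : ℤ) : ZMod (p^2))),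
   (((-(t.1 + (lam.1:ℤ) * t.2.1) : ℤ) : ZMod p), ((-((lam.2:ℤ) * t.2.1) : ℤ) : ZMod p),
    ((-t.2.2.1 : ℤ) : ZMod p), ((-(t.2.2.1 + t.2.2.2) : ℤ) : ZMod p)))

lemma rp_p_int (a : ℤ) : rp p (((p:ℤ) * a : ℤ) : ZMod (p^2)) = 0 := by
  rw [map_intCast]
  push_cast
  simp

lemma beta_nmap_left (t : ℤ × ℤ × ℤ × ℤ) (y : Zp2four p) :
    betaT p (nmap p lam t).1 y = 0 := by
  simp only [betaT, nmap, rp_p_int]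
  simp

lemma beta_nmap_right (t : ℤ × ℤ × ℤ × ℤ) (y : Zp2four p) :
    betaT p y (nmap p lam t).1 = 0 := by
  simp only [betaT, nmap, rp_p_int]
  simp

lemma nmap_mul (t s : ℤ × ℤ × ℤ × ℤ) :
    nmap p lam t * nmap p lam s = nmap p lam (t + s) := by
  apply Tc.ext' <;>
    simp only [↓Tc.mul_def, Tc.mul_def', beta_nmap_left, add_zero] <;>
    simp only [nmap, Prod.fst_add, Prod.snd_add] <;> push_cast <;> ring

lemma nmap_zero : nmap p lam 0 = 1 := by
  apply Tc.ext' <;> simp [nmap, ↓Tc.one_def]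

lemma nmap_central (t : ℤ × ℤ × ℤ × ℤ) (g : Tc p) :
    g * nmap p lam t = nmap p lam t * g := by
  apply Tc.ext' <;>
    simp only [↓Tc.mul_def, Tc.mul_def', beta_nmap_left, beta_nmap_right, Prod.fst_add, Prod.snd_add] <;>
    ring

def NN : Subgroup (Tc p) where
  carrier := Set.range (nmap p lam)
  one_mem' := ⟨0, nmap_zero p lam⟩
  mul_mem' := by
    rintro a b ⟨t, rfl⟩ ⟨s, rfl⟩
    exact ⟨t + s, (nmap_mul p lam t s).symm⟩
  inv_mem' := by
    rintro a ⟨t, rfl⟩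
    refine ⟨-t, ?_⟩
    have h := nmap_mul p lam (-t) t
    simp only [neg_add_cancel, nmap_zero] at h
    exact eq_inv_of_mul_eq_one_left h

instance NN_normal : (NN p lam).Normal := by
  constructor
  rintro x ⟨t, rfl⟩ g
  refine ⟨t, ?_⟩
  rw [nmap_central, mul_assoc, mul_inv_cancel, mul_one]

lemma detect (hp : 0 < p) (m1 m2 m3 m4 : ℤ)
    (h : (((0 : Zp2four p), (((m1 : ZMod p), (m2 : ZMod p), (m3 : ZMod p), (m4 : ZMod p))
      : Zpfour p)) : Tc p) ∈ NN p lam) :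
    (m1 : ZMod p) = 0 ∧ (m2 : ZMod p) = 0 ∧ (m3 : ZMod p) = 0 ∧ (m4 : ZMod p) = 0 := by
  obtain ⟨t, ht⟩ := h
  have hx : ∀ a : ℤ, (((p:ℤ) * a : ℤ) : ZMod (p^2)) = 0 → (a : ZMod p) = 0 := by
    intro a ha
    rw [ZMod.intCast_zmod_eq_zero_iff_dvd] at ha ⊢
    push_cast at ha
    have hpz : (p:ℤ) ≠ 0 := by exact_mod_cast hp.ne'
    rw [show ((p:ℤ)^2 : ℤ) = (p:ℤ) * (p:ℤ) by ring] at ha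
    exact (mul_dvd_mul_iff_left hpz).mp ha
  have e1 := congrArg (fun w : Tc p => w.1.1) ht
  have e2 := congrArg (fun w : Tc p => w.1.2.1) ht
  have e3 := congrArg (fun w : Tc p => w.1.2.2.1) ht
  have e4 := congrArg (fun w : Tc p => w.1.2.2.2) ht
  have f1 := congrArg (fun w : Tc p => w.2.1) ht
  have f2 := congrArg (fun w : Tc p => w.2.2.1) ht
  have f3 := congrArg (fun w : Tc p => w.2.2.2.1) ht
  have f4 := congrArg (fun w : Tc p => w.2.2.2.2) ht
  simp only [nmap] at e1 e2 e3 e4 f1 f2 f3 f4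
  have t1 := hx _ e1
  have t2 := hx _ e2
  have t3 := hx _ e3
  have t4 := hx _ e4
  refine ⟨?_, ?_, ?_, ?_⟩
  · rw [← f1]; push_cast; rw [t1, t2]; ring
  · rw [← f2]; push_cast; rw [t2]; ring
  · rw [← f3]; push_cast; rw [t3]; ring
  · rw [← f4]; push_cast; rw [t3, t4]; ring

end Nsub

section Rels
open Tc
variable (p : ℕ) (lam : ℕ × ℕ)

set_option maxHeartbeats 1000000 in
lemma relT1' : nmap p lam (1,0,0,0) = (A1 p)^p * (gcomm (A1 p) (B1 p))⁻¹ := by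
  rw [A1_pow, gcommT]
  apply Tc.ext' <;>
    simp [nmap, A1, B1, ↓Tc.mul_def, Tc.mul_def', ↓Tc.inv_def, Tc.inv_def', betaT, Prod.fst_add, Prod.snd_add,
      Prod.fst_neg, Prod.snd_neg, Prod.fst_sub, Prod.snd_sub] <;> push_cast <;> ring

set_option maxHeartbeats 1000000 in
lemma relT2' : nmap p lam (0,1,0,0) =
    (A2 p)^p * (gcomm (A1 p) ((B1 p)^lam.1 * (B2 p)^lam.2))⁻¹ := by
  have hBB : (B1 p)^lam.1 * (B2 p)^lam.2 =
      ((((0:ZMod (p^2)),0,(lam.1 : ZMod (p^2)),(lam.2 : ZMod (p^2))) : Zp2four p),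
        (0:Zpfour p)) := by
    rw [B1_pow, B2_pow]
    apply Tc.ext' <;> simp [↓Tc.mul_def, Tc.mul_def', betaT]
  rw [gcommT, A2_pow, hBB]
  apply Tc.ext' <;>
    simp [nmap, A1, ↓Tc.mul_def, Tc.mul_def', ↓Tc.inv_def, Tc.inv_def', betaT, Prod.fst_add, Prod.snd_add,
      Prod.fst_neg, Prod.snd_neg, Prod.fst_sub, Prod.snd_sub] <;> push_cast <;> ring

set_option maxHeartbeats 1000000 in
lemma relT3' : nmap p lam (0,0,1,0) = (B1 p)^p * (gcomm (A2 p) ((B1 p) * (B2 p)))⁻¹ := by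
  have hBB : (B1 p) * (B2 p) =
      ((((0:ZMod (p^2)),0,1,1) : Zp2four p), (0:Zpfour p)) := by
    apply Tc.ext' <;> simp [↓Tc.mul_def, Tc.mul_def', B1, B2, betaT]
  rw [gcommT, hBB, B1_pow]
  apply Tc.ext' <;>
    simp [nmap, A2, ↓Tc.mul_def, Tc.mul_def', ↓Tc.inv_def, Tc.inv_def', betaT, Prod.fst_add, Prod.snd_add,
      Prod.fst_neg, Prod.snd_neg, Prod.fst_sub, Prod.snd_sub] <;> push_cast <;> ring

set_option maxHeartbeats 1000000 in
lemma relT4' : nmap p lam (0,0,0,1) = (B2 p)^p * (gcomm (A2 p) (B2 p))⁻¹ := by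
  rw [B2_pow, gcommT]
  apply Tc.ext' <;>
    simp [nmap, A2, B2, ↓Tc.mul_def, Tc.mul_def', ↓Tc.inv_def, Tc.inv_def', betaT, Prod.fst_add, Prod.snd_add,
      Prod.fst_neg, Prod.snd_neg, Prod.fst_sub, Prod.snd_sub] <;> push_cast <;> ring

lemma relT5 : gcomm (A1 p) (A2 p) = 1 := by
  rw [gcommT]
  apply Tc.ext' <;> simp [A1, A2, betaT, ↓Tc.one_def]

lemma relT6 : gcomm (B1 p) (B2 p) = 1 := by
  rw [gcommT]
  apply Tc.ext' <;> simp [B1, B2, betaT, ↓Tc.one_def]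

end Rels


-- ===== glue =====
section Glue
open Tc
variable (p : ℕ) (lam : ℕ × ℕ)

lemma map_gcomm {G H : Type*} [Group G] [Group H] (φ : G →* H) (x y : G) :
    φ (gcomm x y) = gcomm (φ x) (φ y) := by
  simp [gcomm]

abbrev TQ := Tc p ⧸ NN p lam

abbrev mkQ : Tc p →* TQ p lam := QuotientGroup.mk' (NN p lam)

lemma class2Q (x y z : TQ p lam) : gcomm (gcomm x y) z = 1 := by
  obtain ⟨a, rfl⟩ := QuotientGroup.mk'_surjective (NN p lam) x
  obtain ⟨b, rfl⟩ := QuotientGroup.mk'_surjective (NN p lam) y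
  obtain ⟨c, rfl⟩ := QuotientGroup.mk'_surjective (NN p lam) z
  rw [← map_gcomm, ← map_gcomm, Tc.class2, map_one]

def gens : Fin 4 → Tc p := ![A1 p, A2 p, B1 p, B2 p]

def fQ : Fin 4 → TQ p lam := fun i => mkQ p lam (gens p i)

lemma lift_rels : ∀ r ∈ jkRels p lam, FreeGroup.lift (fQ p lam) r = 1 := by
  rintro r (⟨i, j, k, rfl⟩ | h)
  · rw [map_gcomm, map_gcomm]
    simp only [FreeGroup.lift_apply_of]
    exact class2Q p lam _ _ _
  · simp only [Set.mem_insert_iff, Set.mem_singleton_iff] at h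
    rcases h with rfl | rfl | rfl | rfl | rfl | rfl <;>
      simp only [map_mul, map_inv, map_pow, map_gcomm, FreeGroup.lift_apply_of] <;>
      [skip; skip; skip; skip; skip; skip]
    · show (mkQ p lam (A1 p))^p * (gcomm (mkQ p lam (A1 p)) (mkQ p lam (B1 p)))⁻¹ = 1
      rw [← map_pow, ← map_gcomm, ← map_inv, ← map_mul]
      exact (QuotientGroup.eq_one_iff _).mpr ⟨(1,0,0,0), relT1' p lam⟩
    · show (mkQ p lam (A2 p))^p *
        (gcomm (mkQ p lam (A1 p)) ((mkQ p lam (B1 p))^lam.1 * (mkQ p lam (B2 p))^lam.2))⁻¹ = 1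
      rw [← map_pow, ← map_pow, ← map_pow, ← map_mul, ← map_gcomm, ← map_inv, ← map_mul]
      exact (QuotientGroup.eq_one_iff _).mpr ⟨(0,1,0,0), relT2' p lam⟩
    · show (mkQ p lam (B1 p))^p *
        (gcomm (mkQ p lam (A2 p)) ((mkQ p lam (B1 p)) * (mkQ p lam (B2 p))))⁻¹ = 1
      rw [← map_pow, ← map_mul, ← map_gcomm, ← map_inv, ← map_mul]
      exact (QuotientGroup.eq_one_iff _).mpr ⟨(0,0,1,0), relT3' p lam⟩
    · show (mkQ p lam (B2 p))^p * (gcomm (mkQ p lam (A2 p)) (mkQ p lam (B2 p)))⁻¹ = 1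
      rw [← map_pow, ← map_gcomm, ← map_inv, ← map_mul]
      exact (QuotientGroup.eq_one_iff _).mpr ⟨(0,0,0,1), relT4' p lam⟩
    · show gcomm (mkQ p lam (A1 p)) (mkQ p lam (A2 p)) = 1
      rw [← map_gcomm, relT5, map_one]
    · show gcomm (mkQ p lam (B1 p)) (mkQ p lam (B2 p)) = 1
      rw [← map_gcomm, relT6, map_one]

def phi : JKGroup p lam →* TQ p lam := PresentedGroup.toGroup (lift_rels p lam)

lemma phi_of (i : Fin 4) : phi p lam (PresentedGroup.of i) = mkQ p lam (gens p i) :=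
  PresentedGroup.toGroup.of _

end Glue


section Gside
open Tc
variable (p : ℕ) (lam : ℕ × ℕ)

lemma relG {r : FreeGroup (Fin 4)} (h : r ∈ jkRels p lam) :
    PresentedGroup.mk (jkRels p lam) r = 1 :=
  (QuotientGroup.eq_one_iff _).mpr (Subgroup.subset_normalClosure h)

lemma central_c (i j : Fin 4) (w : JKGroup p lam) :
    Commute (gcomm (PresentedGroup.of (rels := jkRels p lam) i) (PresentedGroup.of j)) w := by
  have hgen : ∀ k : Fin 4, gcomm (gcomm (PresentedGroup.of (rels := jkRels p lam) i)
      (PresentedGroup.of j)) (PresentedGroup.of k) = 1 := by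
    intro k
    have h2 := relG p lam (Or.inl ⟨i, j, k, rfl⟩)
    rwa [map_gcomm, map_gcomm] at h2
  have hw : w ∈ Subgroup.centralizer
      {gcomm (PresentedGroup.of (rels := jkRels p lam) i) (PresentedGroup.of j)} := by
    apply PresentedGroup.generated_by
    intro k
    rw [Subgroup.mem_centralizer_iff]
    rintro g rfl
    exact (commute_of_gcomm_eq_one (hgen k)).eq
  exact Subgroup.mem_centralizer_iff.mp hw _ rfl

-- the six relations
lemma relG1 : (PresentedGroup.of (rels := jkRels p lam) 0)^p =
    gcomm (PresentedGroup.of (rels := jkRels p lam) 0) (PresentedGroup.of 2) := by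
  have h := relG p lam (r := FreeGroup.of 0 ^ p * (gcomm (FreeGroup.of 0) (FreeGroup.of 2))⁻¹)
    (Or.inr (Set.mem_insert _ _))
  rw [map_mul, map_pow, map_inv, map_gcomm] at h
  exact mul_inv_eq_one.mp h

lemma relG2 : (PresentedGroup.of (rels := jkRels p lam) 1)^p =
    gcomm (PresentedGroup.of (rels := jkRels p lam) 0)
      ((PresentedGroup.of (rels := jkRels p lam) 2)^lam.1 *
       (PresentedGroup.of (rels := jkRels p lam) 3)^lam.2) := by
  have h := relG p lam (r := FreeGroup.of 1 ^ p *
      (gcomm (FreeGroup.of 0) (FreeGroup.of 2 ^ lam.1 * FreeGroup.of 3 ^ lam.2))⁻¹)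
    (Or.inr (Set.mem_insert_of_mem _ (Set.mem_insert _ _)))
  rw [map_mul, map_pow, map_inv, map_gcomm, map_mul, map_pow, map_pow] at h
  exact mul_inv_eq_one.mp h

lemma relG5 : gcomm (PresentedGroup.of (rels := jkRels p lam) 0)
    (PresentedGroup.of (rels := jkRels p lam) 1) = 1 := by
  have h := relG p lam (r := gcomm (FreeGroup.of 0) (FreeGroup.of 1))
    (Or.inr (Set.mem_insert_of_mem _ (Set.mem_insert_of_mem _ (Set.mem_insert_of_mem _
      (Set.mem_insert_of_mem _ (Set.mem_insert _ _))))))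
  rwa [map_gcomm] at h

lemma relG6 : gcomm (PresentedGroup.of (rels := jkRels p lam) 2)
    (PresentedGroup.of (rels := jkRels p lam) 3) = 1 := by
  have h := relG p lam (r := gcomm (FreeGroup.of 2) (FreeGroup.of 3))
    (Or.inr (Set.mem_insert_of_mem _ (Set.mem_insert_of_mem _ (Set.mem_insert_of_mem _
      (Set.mem_insert_of_mem _ (Set.mem_insert_of_mem _ rfl))))))
  rwa [map_gcomm] at h

end Gside

-- ===== powers of commutators are trivial =====
section CPow
variable {G : Type*} [Group G]

lemma gcomm_pow_eq_one {x y : G} (n : ℕ) (hc : ∀ w : G, Commute (gcomm x y) w)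
    (hxp : ∀ w : G, Commute (x ^ n) w) : (gcomm x y) ^ (n : ℤ) = 1 := by
  have h1 : x ^ (n:ℤ) * y ^ (1:ℤ) = y ^ (1:ℤ) * x ^ (n:ℤ) * (gcomm x y) ^ ((n:ℤ) * 1) :=
    swap_zpow hc (mul_eq_gcomm x y) n 1
  rw [zpow_one, mul_one] at h1
  have h2 : x ^ (n:ℤ) * y = y * x ^ (n:ℤ) := by
    rw [zpow_natCast]
    exact (hxp y).eq
  rw [h2] at h1
  exact left_eq_mul.mp h1

end CPow

-- ===== z-part arithmetic in Tc =====
section Zpart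
open Tc
variable (p : ℕ)

def zpart (w : Zpfour p) : Tc p := ((0 : Zp2four p), w)

lemma zpart_mul (w w' : Zpfour p) : zpart p w * zpart p w' = zpart p (w + w') := by
  apply Tc.ext' <;> simp [zpart, ↓Tc.mul_def, Tc.mul_def', beta_zero_left]

lemma zpart_pow (w : Zpfour p) (n : ℕ) : (zpart p w) ^ n = zpart p (n • w) := by
  induction n with
  | zero => rw [pow_zero, zero_nsmul]; rfl
  | succ n ih =>
    rw [pow_succ, ih, zpart_mul, succ_nsmul]

lemma zpart_inv (w : Zpfour p) : (zpart p w)⁻¹ = zpart p (-w) := by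
  apply Tc.ext' <;> simp [zpart, ↓Tc.inv_def, Tc.inv_def', beta_zero_left]

lemma zpart_zpow (w : Zpfour p) (m : ℤ) : (zpart p w) ^ m = zpart p (m • w) := by
  cases m with
  | ofNat n => rw [Int.ofNat_eq_coe, zpow_natCast, zpart_pow, natCast_zsmul]
  | negSucc n =>
    rw [zpow_negSucc, zpart_pow, zpart_inv, negSucc_zsmul]

lemma C1T : gcomm (A1 p) (B1 p) = zpart p (1,0,0,0) := by
  rw [Tc.gcommT]; apply Tc.ext' <;> simp [zpart, A1, B1, betaT]

lemma C2T : gcomm (A1 p) (B2 p) = zpart p (0,1,0,0) := by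
  rw [Tc.gcommT]; apply Tc.ext' <;> simp [zpart, A1, B2, betaT]

lemma C3T : gcomm (A2 p) (B1 p) = zpart p (0,0,1,0) := by
  rw [Tc.gcommT]; apply Tc.ext' <;> simp [zpart, A2, B1, betaT]

lemma C4T : gcomm (A2 p) (B2 p) = zpart p (0,0,0,1) := by
  rw [Tc.gcommT]; apply Tc.ext' <;> simp [zpart, A2, B2, betaT]

lemma zpart_prod (m11 m12 m21 m22 : ℤ) :
    (gcomm (A1 p) (B1 p)) ^ m11 * (gcomm (A1 p) (B2 p)) ^ m12 *
    (gcomm (A2 p) (B1 p)) ^ m21 * (gcomm (A2 p) (B2 p)) ^ m22 =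
    zpart p ((m11 : ZMod p), (m12 : ZMod p), (m21 : ZMod p), (m22 : ZMod p)) := by
  rw [C1T, C2T, C3T, C4T, zpart_zpow, zpart_zpow, zpart_zpow, zpart_zpow,
    zpart_mul, zpart_mul, zpart_mul]
  unfold zpart
  apply Tc.ext' <;>
    simp [Prod.smul_fst, Prod.smul_snd, Prod.fst_add, Prod.snd_add, zsmul_eq_mul]

end Zpart

lemma zmodlin (p : ℕ) (hp : p.Prime) (k1 k2 l1 l2 K1 K2 L1 L2 : ZMod p)
    (h11 : k1*L1 = K1*l1) (h12 : k1*L2 = K1*l2)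
    (h21 : k2*L1 = K2*l1) (h22 : k2*L2 = K2*l2) :
    (k1 = 0 ∧ k2 = 0 ∧ l1 = 0 ∧ l2 = 0) ∨
    (K1 = 0 ∧ K2 = 0 ∧ L1 = 0 ∧ L2 = 0) ∨
    (l1 = 0 ∧ l2 = 0 ∧ L1 = 0 ∧ L2 = 0) ∨
    (k1 = 0 ∧ k2 = 0 ∧ K1 = 0 ∧ K2 = 0) ∨
    (∃ c : ZMod p, K1 = c * k1 ∧ K2 = c * k2 ∧ L1 = c * l1 ∧ L2 = c * l2) := by
  haveI : Fact p.Prime := ⟨hp⟩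
  by_cases hk1 : k1 = 0
  · by_cases hk2 : k2 = 0
    · by_cases hl1 : l1 = 0
      · by_cases hl2 : l2 = 0
        · exact Or.inl ⟨hk1, hk2, hl1, hl2⟩
        · -- l2 ≠ 0 : K1 = K2 = 0
          refine Or.inr (Or.inr (Or.inr (Or.inl ⟨hk1, hk2, ?_, ?_⟩)))
          · have := h12; rw [hk1, zero_mul] at this
            exact (mul_eq_zero.mp this.symm).resolve_right hl2
          · have := h22; rw [hk2, zero_mul] at this
            exact (mul_eq_zero.mp this.symm).resolve_right hl2
      · refine Or.inr (Or.inr (Or.inr (Or.inl ⟨hk1, hk2, ?_, ?_⟩)))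
        · have := h11; rw [hk1, zero_mul] at this
          exact (mul_eq_zero.mp this.symm).resolve_right hl1
        · have := h21; rw [hk2, zero_mul] at this
          exact (mul_eq_zero.mp this.symm).resolve_right hl1
    · -- k2 ≠ 0
      by_cases hl : l1 = 0 ∧ l2 = 0
      · obtain ⟨hl1, hl2⟩ := hl
        refine Or.inr (Or.inr (Or.inl ⟨hl1, hl2, ?_, ?_⟩))
        · have := h21; rw [hl1, mul_zero] at this
          exact (mul_eq_zero.mp this).resolve_left hk2
        · have := h22; rw [hl2, mul_zero] at this
          exact (mul_eq_zero.mp this).resolve_left hk2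
      · -- some l nonzero ⇒ K1 = 0
        have hK1 : K1 = 0 := by
          rcases not_and_or.mp hl with hl1 | hl2
          · have := h11; rw [hk1, zero_mul] at this
            exact (mul_eq_zero.mp this.symm).resolve_right hl1
          · have := h12; rw [hk1, zero_mul] at this
            exact (mul_eq_zero.mp this.symm).resolve_right hl2
        refine Or.inr (Or.inr (Or.inr (Or.inr ⟨K2 * k2⁻¹, ?_, ?_, ?_, ?_⟩)))
        · rw [hK1, hk1, mul_zero]
        · field_simp
        · -- L1 = K2/k2 * l1 from h21 : k2 * L1 = K2 * l1
          field_simp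
          calc L1 * k2 = k2 * L1 := by ring
          _ = K2 * l1 := h21
        · field_simp
          calc L2 * k2 = k2 * L2 := by ring
          _ = K2 * l2 := h22
  · -- k1 ≠ 0
    by_cases hl : l1 = 0 ∧ l2 = 0
    · obtain ⟨hl1, hl2⟩ := hl
      refine Or.inr (Or.inr (Or.inl ⟨hl1, hl2, ?_, ?_⟩))
      · have := h11; rw [hl1, mul_zero] at this
        exact (mul_eq_zero.mp this).resolve_left hk1
      · have := h12; rw [hl2, mul_zero] at this
        exact (mul_eq_zero.mp this).resolve_left hk1
    · refine Or.inr (Or.inr (Or.inr (Or.inr ⟨K1 * k1⁻¹, ?_, ?_, ?_, ?_⟩)))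
      · field_simp
      · -- K2 = K1/k1 * k2
        rcases not_and_or.mp hl with hl1 | hl2
        · -- l1 ≠ 0: from h11: k1 L1 = K1 l1 and h21: k2 L1 = K2 l1
          -- k1 * (K2 l1) = k1 k2 L1 = k2 (k1 L1) = k2 K1 l1 ⇒ K2 = K1 k1⁻¹ k2
          field_simp
          have h' : k1 * (K2 * l1) = k2 * (K1 * l1) := by
            calc k1 * (K2 * l1) = K2 * l1 * k1 := by ring
            _ = k2 * L1 * k1 := by rw [← h21]
            _ = k2 * (k1 * L1) := by ring
            _ = k2 * (K1 * l1) := by rw [h11]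
          have := mul_right_cancel₀ hl1 (by
            calc K2 * k1 * l1 = k1 * (K2 * l1) := by ring
            _ = k2 * (K1 * l1) := h'
            _ = K1 * k2 * l1 := by ring)
          rw [this]
        · field_simp
          have h' : k1 * (K2 * l2) = k2 * (K1 * l2) := by
            calc k1 * (K2 * l2) = K2 * l2 * k1 := by ring
            _ = k2 * L2 * k1 := by rw [← h22]
            _ = k2 * (k1 * L2) := by ring
            _ = k2 * (K1 * l2) := by rw [h12]
          have := mul_right_cancel₀ hl2 (by
            calc K2 * k1 * l2 = k1 * (K2 * l2) := by ring
            _ = k2 * (K1 * l2) := h'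
            _ = K1 * k2 * l2 := by ring)
          rw [this]
      · field_simp
        calc L1 * k1 = k1 * L1 := by ring
        _ = K1 * l1 := h11
      · field_simp
        calc L2 * k1 = k1 * L2 := by ring
        _ = K1 * l2 := h12

lemma minors_iff (p : ℕ) (hp : p.Prime) (k₁ k₂ l₁ l₂ K₁ K₂ L₁ L₂ : ℤ) :
    (((k₁*L₁ - K₁*l₁ : ℤ) : ZMod p) = 0 ∧ ((k₁*L₂ - K₁*l₂ : ℤ) : ZMod p) = 0 ∧
     ((k₂*L₁ - K₂*l₁ : ℤ) : ZMod p) = 0 ∧ ((k₂*L₂ - K₂*l₂ : ℤ) : ZMod p) = 0) ↔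
    (((k₁ : ZMod p) = 0 ∧ (k₂ : ZMod p) = 0 ∧ (l₁ : ZMod p) = 0 ∧ (l₂ : ZMod p) = 0) ∨
    ((K₁ : ZMod p) = 0 ∧ (K₂ : ZMod p) = 0 ∧ (L₁ : ZMod p) = 0 ∧ (L₂ : ZMod p) = 0) ∨
    ((l₁ : ZMod p) = 0 ∧ (l₂ : ZMod p) = 0 ∧ (L₁ : ZMod p) = 0 ∧ (L₂ : ZMod p) = 0) ∨
    ((k₁ : ZMod p) = 0 ∧ (k₂ : ZMod p) = 0 ∧ (K₁ : ZMod p) = 0 ∧ (K₂ : ZMod p) = 0) ∨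
    (∃ n : ℤ, (K₁ : ZMod p) = (n : ZMod p) * (k₁ : ZMod p) ∧
      (K₂ : ZMod p) = (n : ZMod p) * (k₂ : ZMod p) ∧
      (L₁ : ZMod p) = (n : ZMod p) * (l₁ : ZMod p) ∧
      (L₂ : ZMod p) = (n : ZMod p) * (l₂ : ZMod p))) := by
  simp only [Int.cast_sub, Int.cast_mul, sub_eq_zero]
  constructor
  · rintro ⟨h11, h12, h21, h22⟩
    rcases zmodlin p hp _ _ _ _ _ _ _ _ h11 h12 h21 h22 with h|h|h|h|⟨c,hc⟩
    · exact Or.inl h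
    · exact Or.inr (Or.inl h)
    · exact Or.inr (Or.inr (Or.inl h))
    · exact Or.inr (Or.inr (Or.inr (Or.inl h)))
    · refine Or.inr (Or.inr (Or.inr (Or.inr ?_)))
      obtain ⟨n, rfl⟩ := ZMod.intCast_surjective c
      exact ⟨n, hc⟩
  · rintro (⟨h1,h2,h3,h4⟩|⟨h1,h2,h3,h4⟩|⟨h1,h2,h3,h4⟩|⟨h1,h2,h3,h4⟩|⟨n,h1,h2,h3,h4⟩) <;>
      refine ⟨?_, ?_, ?_, ?_⟩ <;> simp only [h1, h2, h3, h4] <;> ring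

section Final
open Tc
variable (p : ℕ) (lam : ℕ × ℕ)

lemma minors_of_D (hp : 0 < p) (m11 m12 m21 m22 : ℤ)
    (hD : (gcomm (PresentedGroup.of (rels := jkRels p lam) 0) (PresentedGroup.of 2)) ^ m11 *
          (gcomm (PresentedGroup.of (rels := jkRels p lam) 0) (PresentedGroup.of 3)) ^ m12 *
          (gcomm (PresentedGroup.of (rels := jkRels p lam) 1) (PresentedGroup.of 2)) ^ m21 *
          (gcomm (PresentedGroup.of (rels := jkRels p lam) 1) (PresentedGroup.of 3)) ^ m22 = 1) :
    (m11 : ZMod p) = 0 ∧ (m12 : ZMod p) = 0 ∧ (m21 : ZMod p) = 0 ∧ (m22 : ZMod p) = 0 := by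
  have h2 := congrArg (phi p lam) hD
  rw [map_one, map_mul, map_mul, map_mul, map_zpow, map_zpow, map_zpow, map_zpow,
    map_gcomm, map_gcomm, map_gcomm, map_gcomm, phi_of, phi_of, phi_of, phi_of] at h2
  have g0 : gens p 0 = A1 p := rfl
  have g1 : gens p 1 = A2 p := rfl
  have g2 : gens p 2 = B1 p := rfl
  have g3 : gens p 3 = B2 p := rfl
  rw [g0, g1, g2, g3, ← map_gcomm, ← map_gcomm, ← map_gcomm, ← map_gcomm,
    ← map_zpow, ← map_zpow, ← map_zpow, ← map_zpow, ← map_mul, ← map_mul, ← map_mul,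
    zpart_prod] at h2
  have hmem := (QuotientGroup.eq_one_iff _).mp h2
  exact detect p lam hp m11 m12 m21 m22 hmem

lemma ha1p_central (w : JKGroup p lam) :
    Commute ((PresentedGroup.of (rels := jkRels p lam) 0) ^ p) w := by
  rw [relG1]; exact central_c p lam 0 2 w

lemma ha2p_central (w : JKGroup p lam) :
    Commute ((PresentedGroup.of (rels := jkRels p lam) 1) ^ p) w := by
  rw [relG2]
  have h1 : gcomm (PresentedGroup.of (rels := jkRels p lam) 0)
      ((PresentedGroup.of (rels := jkRels p lam) 2) ^ lam.1) =
      (gcomm (PresentedGroup.of (rels := jkRels p lam) 0) (PresentedGroup.of 2)) ^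
        ((lam.1 : ℕ) : ℤ) := by
    rw [← zpow_natCast (PresentedGroup.of (rels := jkRels p lam) 2) lam.1]
    exact gcomm_zpow_right (central_c p lam 0 2) _
  have h2 : gcomm (PresentedGroup.of (rels := jkRels p lam) 0)
      ((PresentedGroup.of (rels := jkRels p lam) 3) ^ lam.2) =
      (gcomm (PresentedGroup.of (rels := jkRels p lam) 0) (PresentedGroup.of 3)) ^
        ((lam.2 : ℕ) : ℤ) := by
    rw [← zpow_natCast (PresentedGroup.of (rels := jkRels p lam) 3) lam.2]
    exact gcomm_zpow_right (central_c p lam 0 3) _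
  have hy : ∀ u : JKGroup p lam, Commute (gcomm (PresentedGroup.of (rels := jkRels p lam) 0)
      ((PresentedGroup.of (rels := jkRels p lam) 2) ^ lam.1)) u := fun u => by
    rw [h1]; exact (central_c p lam 0 2 u).zpow_left _
  have hw : ∀ u : JKGroup p lam, Commute (gcomm (PresentedGroup.of (rels := jkRels p lam) 0)
      ((PresentedGroup.of (rels := jkRels p lam) 3) ^ lam.2)) u := fun u => by
    rw [h2]; exact (central_c p lam 0 3 u).zpow_left _
  rw [gcomm_mul_right hy hw, h1, h2]
  exact Commute.mul_left ((central_c p lam 0 2 w).zpow_left _)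
    ((central_c p lam 0 3 w).zpow_left _)

lemma c1_pow_one : (gcomm (PresentedGroup.of (rels := jkRels p lam) 0)
    (PresentedGroup.of 2)) ^ (p : ℤ) = 1 :=
  gcomm_pow_eq_one p (central_c p lam 0 2) (ha1p_central p lam)

lemma c2_pow_one : (gcomm (PresentedGroup.of (rels := jkRels p lam) 0)
    (PresentedGroup.of 3)) ^ (p : ℤ) = 1 :=
  gcomm_pow_eq_one p (central_c p lam 0 3) (ha1p_central p lam)

lemma c3_pow_one : (gcomm (PresentedGroup.of (rels := jkRels p lam) 1)
    (PresentedGroup.of 2)) ^ (p : ℤ) = 1 :=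
  gcomm_pow_eq_one p (central_c p lam 1 2) (ha2p_central p lam)

lemma c4_pow_one : (gcomm (PresentedGroup.of (rels := jkRels p lam) 1)
    (PresentedGroup.of 3)) ^ (p : ℤ) = 1 :=
  gcomm_pow_eq_one p (central_c p lam 1 3) (ha2p_central p lam)

end Final

theorem stmt_5 (p : ℕ) (hp : p.Prime) (hodd : Odd p) (lam : ℕ × ℕ)
    (hlam : lam = (1, 0) ∨ (lam.1 ≤ p - 1 ∧ lam.2 = 1))
    (k₁ k₂ l₁ l₂ K₁ K₂ L₁ L₂ : ℤ) :
    (jka₁ p lam ^ k₁ * jka₂ p lam ^ k₂ * jkb₁ p lam ^ l₁ * jkb₂ p lam ^ l₂) *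
      (jka₁ p lam ^ K₁ * jka₂ p lam ^ K₂ * jkb₁ p lam ^ L₁ * jkb₂ p lam ^ L₂) =
    (jka₁ p lam ^ K₁ * jka₂ p lam ^ K₂ * jkb₁ p lam ^ L₁ * jkb₂ p lam ^ L₂) *
      (jka₁ p lam ^ k₁ * jka₂ p lam ^ k₂ * jkb₁ p lam ^ l₁ * jkb₂ p lam ^ l₂) ↔
    ((k₁ : ZMod p) = 0 ∧ (k₂ : ZMod p) = 0 ∧ (l₁ : ZMod p) = 0 ∧ (l₂ : ZMod p) = 0) ∨
    ((K₁ : ZMod p) = 0 ∧ (K₂ : ZMod p) = 0 ∧ (L₁ : ZMod p) = 0 ∧ (L₂ : ZMod p) = 0) ∨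
    ((l₁ : ZMod p) = 0 ∧ (l₂ : ZMod p) = 0 ∧ (L₁ : ZMod p) = 0 ∧ (L₂ : ZMod p) = 0) ∨
    ((k₁ : ZMod p) = 0 ∧ (k₂ : ZMod p) = 0 ∧ (K₁ : ZMod p) = 0 ∧ (K₂ : ZMod p) = 0) ∨
    (∃ n : ℤ, (K₁ : ZMod p) = (n : ZMod p) * (k₁ : ZMod p) ∧
      (K₂ : ZMod p) = (n : ZMod p) * (k₂ : ZMod p) ∧
      (L₁ : ZMod p) = (n : ZMod p) * (l₁ : ZMod p) ∧
      (L₂ : ZMod p) = (n : ZMod p) * (l₂ : ZMod p)) := by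
  have key := key_comm (g0 := jka₁ p lam) (g1 := jka₂ p lam) (g2 := jkb₁ p lam)
    (g3 := jkb₂ p lam) (central_c p lam 0 2) (central_c p lam 0 3)
    (central_c p lam 1 2) (central_c p lam 1 3)
    (commute_of_gcomm_eq_one (relG5 p lam)) (commute_of_gcomm_eq_one (relG6 p lam))
    k₁ k₂ l₁ l₂ K₁ K₂ L₁ L₂
  rw [← minors_iff p hp k₁ k₂ l₁ l₂ K₁ K₂ L₁ L₂]
  constructor
  · intro h
    rw [h] at key
    have hD := left_eq_mul.mp key
    exact minors_of_D p lam hp.pos _ _ _ _ hD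
  · rintro ⟨h11, h12, h21, h22⟩
    have hone : ∀ (c : JKGroup p lam) (m : ℤ), c ^ (p : ℤ) = 1 → (m : ZMod p) = 0 →
        c ^ m = 1 := by
      intro c m hcp hm
      obtain ⟨t, rfl⟩ := (ZMod.intCast_zmod_eq_zero_iff_dvd m p).mp hm
      rw [zpow_mul, hcp, one_zpow]
    have hc1p : gcomm (jka₁ p lam) (jkb₁ p lam) ^ (p:ℤ) = 1 := c1_pow_one p lam
    have hc2p : gcomm (jka₁ p lam) (jkb₂ p lam) ^ (p:ℤ) = 1 := c2_pow_one p lam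
    have hc3p : gcomm (jka₂ p lam) (jkb₁ p lam) ^ (p:ℤ) = 1 := c3_pow_one p lam
    have hc4p : gcomm (jka₂ p lam) (jkb₂ p lam) ^ (p:ℤ) = 1 := c4_pow_one p lam
    rw [key, hone _ _ hc1p h11, hone _ _ hc2p h12, hone _ _ hc3p h21, hone _ _ hc4p h22]
    simp
end
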